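/- arXiv:1711.04863 — 7 statements merged into one kernel-verified Lean document; each statement's English description precedes it below -/
import Mathlib

section
/- Let P be the matrix of a nonzero orthogonal projection on ℝⁿ and let A be a nonzero symmetric n×n real matrix. Then the spectral radius of PA satisfies ρ(PA) ≤ sup{ ‖Av‖₂ / ‖v‖₂ : v ∈ Ran(P), v ≠ 0 }, i.e. every (complex) eigenvalue μ of PA satisfies |μ| ≤ the operator norm of the restriction of A to Ran(P). -/
open Matrix
open scoped ComplexOrder

private lemma sqrt_dot_eq' {n : ℕ} (u : Fin n → ℝ) :
    Real.sqrt (u ⬝ᵥ u) = ‖(WithLp.equiv 2 (Fin n → ℝ)).symm u‖ := by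
  rw [EuclideanSpace.norm_eq]
  congr 1
  simp [dotProduct, Real.norm_eq_abs, sq_abs, pow_two]

private lemma dot_self_pos' {n : ℕ} {u : Fin n → ℝ} (hu : u ≠ 0) : 0 < u ⬝ᵥ u := by
  have h1 : 0 ≤ u ⬝ᵥ u := Finset.sum_nonneg fun i _ => mul_self_nonneg _
  rcases h1.lt_or_eq with h | h
  · exact h
  · exact absurd (dotProduct_self_eq_zero.mp h.symm) hu

private lemma bddAbove_S' {n : ℕ} (P A : Matrix (Fin n) (Fin n) ℝ) :
    BddAbove {r : ℝ | ∃ v : Fin n → ℝ, v ∈ LinearMap.range P.mulVecLin ∧ v ≠ 0 ∧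
      r = Real.sqrt (A.mulVec v ⬝ᵥ A.mulVec v) / Real.sqrt (v ⬝ᵥ v)} := by
  set f := LinearMap.toContinuousLinearMap (Matrix.toEuclideanLin A) with hf
  refine ⟨‖f‖, fun r hr => ?_⟩
  obtain ⟨v, -, hv0, rfl⟩ := hr
  have hvpos : (0:ℝ) < Real.sqrt (v ⬝ᵥ v) := Real.sqrt_pos.2 (dot_self_pos' hv0)
  rw [div_le_iff₀ hvpos, sqrt_dot_eq', sqrt_dot_eq']
  calc ‖(WithLp.equiv 2 (Fin n → ℝ)).symm (A.mulVec v)‖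
      = ‖f ((WithLp.equiv 2 (Fin n → ℝ)).symm v)‖ := by
        rw [hf]
        congr 1
    _ ≤ ‖f‖ * ‖(WithLp.equiv 2 (Fin n → ℝ)).symm v‖ := f.le_opNorm _

private lemma proj_contract' {n : ℕ} {P : Matrix (Fin n) (Fin n) ℝ}
    (hP2 : P * P = P) (hPsym : Pᵀ = P) (u : Fin n → ℝ) :
    (P.mulVec u) ⬝ᵥ (P.mulVec u) ≤ u ⬝ᵥ u := by
  have h1 : (P.mulVec u) ⬝ᵥ (P.mulVec u) = u ⬝ᵥ (P.mulVec u) := by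
    calc (P.mulVec u) ⬝ᵥ (P.mulVec u) = (P.mulVec u) ᵥ* P ⬝ᵥ u := by
          rw [Matrix.dotProduct_mulVec]
      _ = (Pᵀ.mulVec (P.mulVec u)) ⬝ᵥ u := by rw [Matrix.mulVec_transpose]
      _ = ((Pᵀ * P).mulVec u) ⬝ᵥ u := by rw [Matrix.mulVec_mulVec]
      _ = (P.mulVec u) ⬝ᵥ u := by rw [hPsym, hP2]
      _ = u ⬝ᵥ (P.mulVec u) := dotProduct_comm _ _
  have h2 : 0 ≤ (u - P.mulVec u) ⬝ᵥ (u - P.mulVec u) :=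
    Finset.sum_nonneg fun i _ => mul_self_nonneg _
  have h3 : (u - P.mulVec u) ⬝ᵥ (u - P.mulVec u)
      = u ⬝ᵥ u - u ⬝ᵥ (P.mulVec u) - ((P.mulVec u) ⬝ᵥ u - (P.mulVec u) ⬝ᵥ (P.mulVec u)) := by
    rw [sub_dotProduct, dotProduct_sub, dotProduct_sub]
  have h4 : (P.mulVec u) ⬝ᵥ u = u ⬝ᵥ (P.mulVec u) := dotProduct_comm _ _
  linarith [h2, h3 ▸ h2]

private lemma key_ineq' {n : ℕ} {P A : Matrix (Fin n) (Fin n) ℝ}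
    (hP2 : P * P = P) (hPsym : Pᵀ = P) {w : Fin n → ℝ} {t : ℝ}
    (hw0 : w ≠ 0) (heig : (P * A).mulVec w = t • w) :
    |t| ≤ Real.sqrt (A.mulVec w ⬝ᵥ A.mulVec w) / Real.sqrt (w ⬝ᵥ w) := by
  have hdpos : 0 < w ⬝ᵥ w := dot_self_pos' hw0
  have hPAw : P.mulVec (A.mulVec w) = t • w := by
    rw [Matrix.mulVec_mulVec, heig]
  have hsq : t ^ 2 * (w ⬝ᵥ w) ≤ A.mulVec w ⬝ᵥ A.mulVec w := by
    have := proj_contract' hP2 hPsym (A.mulVec w)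
    rw [hPAw] at this
    calc t ^ 2 * (w ⬝ᵥ w) = (t • w) ⬝ᵥ (t • w) := by
          rw [smul_dotProduct, dotProduct_smul, smul_eq_mul, smul_eq_mul]
          ring
      _ ≤ _ := this
  have hsqrt := Real.sqrt_le_sqrt hsq
  rw [Real.sqrt_mul (sq_nonneg t), Real.sqrt_sq_eq_abs] at hsqrt
  rw [le_div_iff₀ (Real.sqrt_pos.2 hdpos)]
  exact hsqrt

private lemma star_dot_hermitian {n : ℕ} (M : Matrix (Fin n) (Fin n) ℂ) (hM : Mᴴ = M)
    (v : Fin n → ℂ) : star (star v ⬝ᵥ M.mulVec v) = star v ⬝ᵥ M.mulVec v := by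
  calc star (star v ⬝ᵥ M.mulVec v)
      = star (M.mulVec v) ⬝ᵥ star (star v) := (Matrix.star_dotProduct_star _ _).symm
    _ = (star v ᵥ* Mᴴ) ⬝ᵥ v := by rw [star_star, Matrix.star_mulVec]
    _ = star v ⬝ᵥ (Mᴴ.mulVec v) := (Matrix.dotProduct_mulVec _ _ _).symm
    _ = star v ⬝ᵥ M.mulVec v := by rw [hM]

private lemma re_im_mulVec {n : ℕ} (M : Matrix (Fin n) (Fin n) ℝ) (v : Fin n → ℂ) (t : ℝ)
    (h : (M.map (fun r : ℝ => (r : ℂ))).mulVec v = (t : ℂ) • v) :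
    M.mulVec (fun i => (v i).re) = t • (fun i => (v i).re) ∧
    M.mulVec (fun i => (v i).im) = t • (fun i => (v i).im) := by
  constructor <;> funext j <;>
  · have hj := congrFun h j
    simp only [Matrix.mulVec, dotProduct, Matrix.map_apply, Pi.smul_apply,
      smul_eq_mul] at hj ⊢
    have := congrArg Complex.re hj
    have := congrArg Complex.im hj
    simp only [Complex.re_sum, Complex.im_sum, Complex.mul_re, Complex.mul_im,
      Complex.ofReal_re, Complex.ofReal_im, zero_mul, mul_zero, sub_zero, add_zero,
      zero_add, zero_sub, neg_zero] at *
    assumption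

private lemma map_mul_coe' {n : ℕ} (M N : Matrix (Fin n) (Fin n) ℝ) :
    (M * N).map (fun r : ℝ => (r : ℂ)) =
      M.map (fun r : ℝ => (r : ℂ)) * N.map (fun r : ℝ => (r : ℂ)) := by
  ext i j
  simp only [Matrix.map_apply, Matrix.mul_apply]
  push_cast
  rfl

/-- For a nonzero orthogonal projection matrix `P` and a nonzero symmetric
matrix `A` on `ℝⁿ`, every complex eigenvalue `μ` of `PA` satisfies
`|μ| ≤ sup { ‖Av‖₂ / ‖v‖₂ : v ∈ Ran(P), v ≠ 0 }`, i.e. the spectral radius of `PA` is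
bounded by the operator norm of the restriction of `A` to `Ran(P)`. -/
theorem spectral_radius_proj_mul_symm_le {n : ℕ}
    (P A : Matrix (Fin n) (Fin n) ℝ)
    (hP2 : P * P = P) (hPsym : Pᵀ = P) (hP0 : P ≠ 0)
    (hAsym : Aᵀ = A) (hA0 : A ≠ 0) :
    ∀ μ : ℂ,
      (∃ v : Fin n → ℂ, v ≠ 0 ∧
          ((P * A).map (fun r : ℝ => (r : ℂ))).mulVec v = μ • v) →
      ‖μ‖ ≤
        sSup {r : ℝ | ∃ v : Fin n → ℝ, v ∈ LinearMap.range P.mulVecLin ∧ v ≠ 0 ∧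
          r = Real.sqrt (A.mulVec v ⬝ᵥ A.mulVec v) / Real.sqrt (v ⬝ᵥ v)} := by
  intro μ hμ
  obtain ⟨v, hv0, hv⟩ := hμ
  have hbdd := bddAbove_S' P A
  by_cases hμ0 : μ = 0
  · -- spectral radius side is 0; show the sup is nonnegative
    subst hμ0
    rw [norm_zero]
    have hex : ∃ w, P.mulVec w ≠ 0 := by
      by_contra h
      push_neg at h
      apply hP0
      have hz : Matrix.toLin' P = Matrix.toLin' (0 : Matrix (Fin n) (Fin n) ℝ) := by
        rw [map_zero]
        exact LinearMap.ext fun w => by simpa [Matrix.toLin'_apply] using h w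
      exact Matrix.toLin'.injective hz
    obtain ⟨w0, hw0⟩ := hex
    set w := P.mulVec w0 with hwdef
    have hPw : P.mulVec w = w := by rw [hwdef, Matrix.mulVec_mulVec, hP2]
    have hmem : Real.sqrt (A.mulVec w ⬝ᵥ A.mulVec w) / Real.sqrt (w ⬝ᵥ w) ∈
        {r : ℝ | ∃ v : Fin n → ℝ, v ∈ LinearMap.range P.mulVecLin ∧ v ≠ 0 ∧
          r = Real.sqrt (A.mulVec v ⬝ᵥ A.mulVec v) / Real.sqrt (v ⬝ᵥ v)} :=
      ⟨w, ⟨w0, by rw [Matrix.mulVecLin_apply]⟩, hw0, rfl⟩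
    exact le_trans (div_nonneg (Real.sqrt_nonneg _) (Real.sqrt_nonneg _))
      (le_csSup hbdd hmem)
  · set Pc := P.map (fun r : ℝ => (r : ℂ)) with hPc
    set Ac := A.map (fun r : ℝ => (r : ℂ)) with hAc
    have hmap : (P * A).map (fun r : ℝ => (r : ℂ)) = Pc * Ac := map_mul_coe' P A
    rw [hmap] at hv
    have hPc2 : Pc * Pc = Pc := by
      rw [hPc, ← map_mul_coe', hP2]
    -- v is in the range of Pc
    have hPv : Pc.mulVec v = v := by
      have h1 : Pc.mulVec ((Pc * Ac).mulVec v) = (Pc * Ac).mulVec v := by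
        rw [Matrix.mulVec_mulVec, ← mul_assoc, hPc2]
      rw [hv, Matrix.mulVec_smul] at h1
      exact smul_right_injective (Fin n → ℂ) hμ0 h1
    -- μ is real
    have hherm : ((Pc * Ac) * Pc)ᴴ = (Pc * Ac) * Pc := by
      have hreal : ∀ X : Matrix (Fin n) (Fin n) ℝ,
          ((X.map (fun r : ℝ => (r : ℂ)))ᴴ = (Xᵀ).map (fun r : ℝ => (r : ℂ))) := by
        intro X
        ext i j
        simp [Matrix.conjTranspose_apply, Matrix.map_apply]
      rw [hPc, hAc, ← map_mul_coe', ← map_mul_coe', hreal]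
      have htr : (P * A * P)ᵀ = P * A * P := by
        rw [Matrix.transpose_mul, Matrix.transpose_mul, hPsym, hAsym, mul_assoc]
      rw [htr]
    have hMv : ((Pc * Ac) * Pc).mulVec v = μ • v := by
      rw [← Matrix.mulVec_mulVec, hPv, hv]
    have hstar : star μ = μ := by
      have hc0 : star v ⬝ᵥ v ≠ 0 := fun h => hv0 (dotProduct_star_self_eq_zero.mp h)
      have hcstar : star (star v ⬝ᵥ v) = star v ⬝ᵥ v := (Matrix.star_dotProduct _ _).symm
      have hs := star_dot_hermitian _ hherm v
      rw [hMv] at hs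
      rw [dotProduct_smul, smul_eq_mul, star_mul', hcstar] at hs
      exact mul_right_cancel₀ hc0 hs
    set t := μ.re with ht
    have hμt : (t : ℂ) = μ := Complex.conj_eq_iff_re.mp hstar
    -- extract a real eigenvector
    rw [← hμt] at hv
    rw [← hmap] at hv
    obtain ⟨hx, hy⟩ := re_im_mulVec (P * A) v t hv
    have hPv1 : (P.map (fun r : ℝ => (r : ℂ))).mulVec v = ((1 : ℝ) : ℂ) • v := by
      rw [← hPc, hPv]; simp
    obtain ⟨hPx, hPy⟩ := re_im_mulVec P v 1 hPv1
    rw [one_smul] at hPx hPy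
    have hxy : (fun i => (v i).re) ≠ 0 ∨ (fun i => (v i).im) ≠ 0 := by
      by_contra h
      push_neg at h
      apply hv0
      funext i
      exact Complex.ext (congrFun h.1 i) (congrFun h.2 i)
    obtain ⟨w, hw0, hPw, heig⟩ :
        ∃ w : Fin n → ℝ, w ≠ 0 ∧ P.mulVec w = w ∧ (P * A).mulVec w = t • w := by
      rcases hxy with h | h
      · exact ⟨_, h, hPx, hx⟩
      · exact ⟨_, h, hPy, hy⟩
    have hkey := key_ineq' hP2 hPsym hw0 heig
    have hmem : Real.sqrt (A.mulVec w ⬝ᵥ A.mulVec w) / Real.sqrt (w ⬝ᵥ w) ∈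
        {r : ℝ | ∃ v : Fin n → ℝ, v ∈ LinearMap.range P.mulVecLin ∧ v ≠ 0 ∧
          r = Real.sqrt (A.mulVec v ⬝ᵥ A.mulVec v) / Real.sqrt (v ⬝ᵥ v)} :=
      ⟨w, ⟨w, by rw [Matrix.mulVecLin_apply, hPw]⟩, hw0, rfl⟩
    have habs : ‖μ‖ = |t| := by rw [← hμt, Complex.norm_real, Real.norm_eq_abs]
    rw [habs]
    exact le_trans hkey (le_csSup hbdd hmem)
end

section
/- Let f : ℝⁿ → ℝ be twice continuously differentiable and let x* be a point with ∇f(x*) = 0 whose Hessian matrix D²f(x*) is positive definite; let μ₁ denote the largest eigenvalue of D²f(x*). Then for every step length η with 0 < η < 2/μ₁ there exists r > 0 such that for every x⁽⁰⁾ in the closed Euclidean ball of radius r around x*, the steepest descent iterates x⁽ᵏ⁺¹⁾ = x⁽ᵏ⁾ − η ∇f(x⁽ᵏ⁾) remain in that ball and converge linearly to x*: there exists L ∈ (0,1) such that ‖x⁽ᵏ⁾ − x*‖₂ ≤ Lᵏ ‖x⁽⁰⁾ − x*‖₂ for all k. -/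
open Matrix Metric

set_option maxHeartbeats 1000000 in
/-- Local linear convergence of steepest descent. If `f : ℝⁿ → ℝ` is twice
continuously differentiable, `∇f(x*) = 0`, the Hessian matrix `H` of `f` at `x*` is positive
definite with largest eigenvalue `μ₁`, then for every step length `0 < η < 2/μ₁` there is
`r > 0` such that for every starting point `x⁽⁰⁾` in the closed Euclidean ball of radius `r`
around `x*`, the iterates `x⁽ᵏ⁺¹⁾ = x⁽ᵏ⁾ − η ∇f(x⁽ᵏ⁾)` stay in the ball and converge
linearly to `x*`. -/
theorem steepest_descent_local_linear_convergence {n : ℕ}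
    (f : EuclideanSpace ℝ (Fin n) → ℝ) (hf : ContDiff ℝ 2 f)
    (xstar : EuclideanSpace ℝ (Fin n)) (hcrit : gradient f xstar = 0)
    (H : Matrix (Fin n) (Fin n) ℝ)
    (hH : ∀ i j, H i j =
      fderiv ℝ (fun y => fderiv ℝ f y (EuclideanSpace.single j 1)) xstar
        (EuclideanSpace.single i 1))
    (hpos : H.PosDef)
    (μ₁ : ℝ) (hμ₁ : IsGreatest {μ : ℝ | ∃ v : Fin n → ℝ, v ≠ 0 ∧ H.mulVec v = μ • v} μ₁) :
    ∀ η : ℝ, 0 < η → η < 2 / μ₁ →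
      ∃ r > 0, ∃ L : ℝ, 0 < L ∧ L < 1 ∧
        ∀ x0 : EuclideanSpace ℝ (Fin n), ‖x0 - xstar‖ ≤ r →
          ∀ xseq : ℕ → EuclideanSpace ℝ (Fin n), xseq 0 = x0 →
            (∀ k, xseq (k + 1) = xseq k - η • gradient f (xseq k)) →
            (∀ k, ‖xseq k - xstar‖ ≤ r) ∧
            (∀ k, ‖xseq k - xstar‖ ≤ L ^ k * ‖x0 - xstar‖) := by
  intro η hη hη2
  -- basic setup
  have hne : Nonempty (Fin n) := by
    obtain ⟨v, hv, -⟩ := hμ₁.1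
    rcases Function.ne_iff.1 hv with ⟨i, -⟩
    exact ⟨i⟩
  have hHerm : H.IsHermitian := hpos.1
  have hsym : ∀ i j, H i j = H j i := by
    intro i j
    have := congrFun (congrFun hHerm.eq j) i
    simpa [Matrix.conjTranspose_apply] using this
  have htr : H.transpose = H := by
    ext i j; exact hsym j i
  set μ : Fin n → ℝ := hHerm.eigenvalues with hμdef
  have hμpos : ∀ i, 0 < μ i := fun i => hpos.eigenvalues_pos i
  have hμle : ∀ i, μ i ≤ μ₁ := by
    intro i
    apply hμ₁.2
    exact ⟨hHerm.eigenvectorBasis i, by simpa using hHerm.eigenvectorBasis.orthonormal.ne_zero i,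
      hHerm.mulVec_eigenvectorBasis i⟩
  have hμ₁pos : 0 < μ₁ := (hμpos (Classical.arbitrary _)).trans_le (hμle _)
  have hημ₁ : η * μ₁ < 2 := (lt_div_iff₀ hμ₁pos).mp hη2
  -- the linear contraction factor
  set L₀ : ℝ := Finset.univ.sup' (Finset.univ_nonempty) (fun i => |1 - η * μ i|) with hL₀def
  have hL₀lt : L₀ < 1 := by
    rw [hL₀def, Finset.sup'_lt_iff]
    intro i _
    rw [abs_lt]
    constructor
    · nlinarith [hμle i, hμpos i]
    · nlinarith [hμpos i]
  have hL₀le : ∀ i, |1 - η * μ i| ≤ L₀ := fun i =>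
    Finset.le_sup' (fun i => |1 - η * μ i|) (Finset.mem_univ i)
  have hL₀nonneg : 0 ≤ L₀ :=
    le_trans (abs_nonneg _) (hL₀le (Classical.arbitrary _))
  -- the key linear estimate
  have hlin : ∀ v : EuclideanSpace ℝ (Fin n),
      ‖v - η • (Matrix.toEuclideanLin H v)‖ ≤ L₀ * ‖v‖ := by
    intro v
    set b := hHerm.eigenvectorBasis with hbdef
    have key : ∀ i, b.repr (v - η • (Matrix.toEuclideanLin H v)) i
        = (1 - η * μ i) * b.repr v i := by
      intro i
      have h1 : b.repr (Matrix.toEuclideanLin H v) i = μ i * b.repr v i := by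
        rw [b.repr_apply_apply, b.repr_apply_apply]
        have hdot : ∀ w : EuclideanSpace ℝ (Fin n),
            (inner ℝ (b i) w : ℝ) = (b i : Fin n → ℝ) ⬝ᵥ (w : Fin n → ℝ) := by
          intro w
          simp [PiLp.inner_apply, dotProduct, RCLike.inner_apply, mul_comm]
        rw [hdot, hdot]
        have hco : ((Matrix.toEuclideanLin H v : EuclideanSpace ℝ (Fin n)) : Fin n → ℝ)
            = H.mulVec (v : Fin n → ℝ) := rfl
        have hmv : H *ᵥ (b i : Fin n → ℝ) = μ i • (b i : Fin n → ℝ) :=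
          hHerm.mulVec_eigenvectorBasis i
        rw [hco, dotProduct_mulVec, ← mulVec_transpose, htr, hmv, smul_dotProduct,
          smul_eq_mul]
      have h2 : b.repr (v - η • (Matrix.toEuclideanLin H v)) i
          = b.repr v i - η * b.repr (Matrix.toEuclideanLin H v) i := by
        simp [map_sub, _root_.map_smul]
      rw [h2, h1]; ring
    have hnv : ‖v - η • (Matrix.toEuclideanLin H v)‖
        = ‖b.repr (v - η • (Matrix.toEuclideanLin H v))‖ := (b.repr.norm_map _).symm
    have hnv2 : ‖v‖ = ‖b.repr v‖ := (b.repr.norm_map _).symm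
    rw [hnv, hnv2, EuclideanSpace.norm_eq, EuclideanSpace.norm_eq]
    have : L₀ * Real.sqrt (∑ i, ‖b.repr v i‖ ^ 2)
        = Real.sqrt (∑ i, L₀ ^ 2 * ‖b.repr v i‖ ^ 2) := by
      rw [← Finset.mul_sum, Real.sqrt_mul (by positivity), Real.sqrt_sq hL₀nonneg]
    rw [this]
    apply Real.sqrt_le_sqrt
    apply Finset.sum_le_sum
    intro i _
    rw [key i]
    have h3 := hL₀le i
    have h4 : (1 - η * μ i) ^ 2 ≤ L₀ ^ 2 := by
      nlinarith [abs_nonneg (1 - η * μ i), sq_abs (1 - η * μ i)]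
    rw [norm_mul, mul_pow]
    gcongr
    rwa [Real.norm_eq_abs]
  -- identify the derivative of the gradient with H
  have hgradC1 : ContDiff ℝ 1 (gradient f) := by
    have h1 : ContDiff ℝ 1 (fderiv ℝ f) := hf.fderiv_right (by norm_num)
    exact ((InnerProductSpace.toDual ℝ
      (EuclideanSpace ℝ (Fin n))).symm.toContinuousLinearEquiv.toContinuousLinearMap.contDiff).comp h1
  have hfderivdiff : Differentiable ℝ (fderiv ℝ f) :=
    (hf.fderiv_right (m := 1) (by norm_num)).differentiable one_ne_zero
  set D := fderiv ℝ (fderiv ℝ f) xstar with hDdef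
  have hDfa : HasFDerivAt (fderiv ℝ f) D xstar := (hfderivdiff xstar).hasFDerivAt
  set Φ := (InnerProductSpace.toDual ℝ (EuclideanSpace ℝ (Fin n))).symm with hΦdef
  have hgradfa : HasFDerivAt (gradient f)
      (Φ.toContinuousLinearEquiv.toContinuousLinearMap.comp D) xstar :=
    (Φ.toContinuousLinearEquiv.toContinuousLinearMap.hasFDerivAt).comp xstar hDfa
  set A := fderiv ℝ (gradient f) xstar with hAdef
  have hAeq : A = Φ.toContinuousLinearEquiv.toContinuousLinearMap.comp D := hgradfa.fderiv
  -- A v = H *ᵥ v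
  have hbasis : ∀ i, A (EuclideanSpace.single i 1)
      = Matrix.toEuclideanLin H (EuclideanSpace.single i 1) := by
    intro i
    ext j
    have hDij : D (EuclideanSpace.single i 1) (EuclideanSpace.single j 1) = H i j := by
      rw [hH i j]
      have hswap : fderiv ℝ (fun y => fderiv ℝ f y (EuclideanSpace.single j 1)) xstar
          = D.flip (EuclideanSpace.single j 1) := by
        rw [hDdef, fderiv_clm_apply (hfderivdiff xstar) (differentiableAt_const _)]
        simp
      rw [hswap]; rfl
    have hΦj : ∀ d : StrongDual ℝ (EuclideanSpace ℝ (Fin n)),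
        (Φ d : EuclideanSpace ℝ (Fin n)) j = d (EuclideanSpace.single j 1) := by
      intro d
      have h7 := InnerProductSpace.toDual_symm_apply (𝕜 := ℝ)
        (x := EuclideanSpace.single j 1) (y := d)
      rw [← h7, ← hΦdef]
      simp [PiLp.inner_apply, EuclideanSpace.single_apply]
    have hAvj : A (EuclideanSpace.single i 1) j
        = D (EuclideanSpace.single i 1) (EuclideanSpace.single j 1) := by
      rw [hAeq]
      exact hΦj (D (EuclideanSpace.single i 1))
    rw [hAvj, hDij]
    have : (Matrix.toEuclideanLin H (EuclideanSpace.single i 1) : EuclideanSpace ℝ (Fin n)) j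
        = H.mulVec (Pi.single i 1) j := rfl
    rw [this, mulVec_single]
    simp [hsym i j]
  have hAlin : (A : EuclideanSpace ℝ (Fin n) →ₗ[ℝ] EuclideanSpace ℝ (Fin n))
      = Matrix.toEuclideanLin H := by
    apply Module.Basis.ext (EuclideanSpace.basisFun (Fin n) ℝ).toBasis
    intro i
    simpa [EuclideanSpace.basisFun_apply] using hbasis i
  have hAv : ∀ v : EuclideanSpace ℝ (Fin n), A v = Matrix.toEuclideanLin H v := fun v =>
    LinearMap.congr_fun hAlin v
  -- the nonlinear iteration map
  set g : EuclideanSpace ℝ (Fin n) → EuclideanSpace ℝ (Fin n) :=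
    fun x => x - η • gradient f x with hgdef
  have hgC1 : ContDiff ℝ 1 g := contDiff_id.sub (hgradC1.const_smul η)
  have hgfderiv : ∀ x, fderiv ℝ g x
      = ContinuousLinearMap.id ℝ (EuclideanSpace ℝ (Fin n)) - η • fderiv ℝ (gradient f) x := by
    intro x
    have h1 : HasFDerivAt g
        (ContinuousLinearMap.id ℝ (EuclideanSpace ℝ (Fin n)) - η • fderiv ℝ (gradient f) x) x :=
      (hasFDerivAt_id x).sub (((hgradC1.differentiable one_ne_zero x).hasFDerivAt).const_smul η)
    exact h1.fderiv
  have hB : ‖fderiv ℝ g xstar‖ ≤ L₀ := by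
    rw [hgfderiv]
    apply ContinuousLinearMap.opNorm_le_bound _ hL₀nonneg
    intro v
    simp only [ContinuousLinearMap.sub_apply, ContinuousLinearMap.id_apply,
      ContinuousLinearMap.smul_apply]
    rw [← hAdef, hAv v]
    exact hlin v
  -- choose the radius by continuity of the derivative
  have hcontfd : Continuous (fun x => fderiv ℝ (gradient f) x) :=
    hgradC1.continuous_fderiv one_ne_zero
  set ε : ℝ := (1 - L₀) / (2 * η) with hεdef
  have hεpos : 0 < ε := by
    apply div_pos <;> nlinarith
  obtain ⟨δ, hδpos, hδ⟩ := Metric.continuousAt_iff.mp (hcontfd.continuousAt (x := xstar)) ε hεpos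
  set r : ℝ := δ / 2 with hrdef
  have hrpos : 0 < r := by positivity
  set L : ℝ := (1 + L₀) / 2 with hLdef
  have hLpos : 0 < L := by positivity
  have hLlt : L < 1 := by rw [hLdef]; linarith
  have bound : ∀ x ∈ closedBall xstar r, ‖fderiv ℝ g x‖ ≤ L := by
    intro x hx
    have hdist : dist x xstar < δ := lt_of_le_of_lt (mem_closedBall.mp hx) (by linarith)
    have h5 : ‖fderiv ℝ (gradient f) x - A‖ < ε := by
      have := hδ hdist
      rwa [dist_eq_norm] at this
    rw [hgfderiv]
    have hsplit : ContinuousLinearMap.id ℝ (EuclideanSpace ℝ (Fin n))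
          - η • fderiv ℝ (gradient f) x
        = (ContinuousLinearMap.id ℝ (EuclideanSpace ℝ (Fin n)) - η • A)
          + η • (A - fderiv ℝ (gradient f) x) := by
      rw [smul_sub]; abel
    rw [hsplit]
    calc ‖(ContinuousLinearMap.id ℝ (EuclideanSpace ℝ (Fin n)) - η • A)
          + η • (A - fderiv ℝ (gradient f) x)‖
        ≤ ‖ContinuousLinearMap.id ℝ (EuclideanSpace ℝ (Fin n)) - η • A‖
          + ‖η • (A - fderiv ℝ (gradient f) x)‖ := norm_add_le _ _
      _ ≤ L₀ + η * ε := by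
          apply add_le_add
          · rw [← hgfderiv xstar] at *
            · exact hB
          · rw [norm_smul, Real.norm_eq_abs, abs_of_pos hη]
            have : ‖A - fderiv ℝ (gradient f) x‖ < ε := by rwa [norm_sub_rev]
            exact mul_le_mul_of_nonneg_left this.le hη.le
      _ = L := by rw [hεdef, hLdef]; field_simp; ring
  -- contraction on the closed ball
  have hgfix : g xstar = xstar := by rw [hgdef]; simp [hcrit]
  have hcontract : ∀ x ∈ closedBall xstar r, ‖g x - xstar‖ ≤ L * ‖x - xstar‖ := by
    intro x hx
    have := Convex.norm_image_sub_le_of_norm_fderiv_le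
      (fun y _ => hgC1.differentiable one_ne_zero y) bound (convex_closedBall xstar r)
      (mem_closedBall_self hrpos.le) hx
    rwa [hgfix] at this
  refine ⟨r, hrpos, L, hLpos, hLlt, ?_⟩
  intro x0 hx0 xseq h0 hrec
  have main : ∀ k, ‖xseq k - xstar‖ ≤ L ^ k * ‖x0 - xstar‖ ∧ ‖xseq k - xstar‖ ≤ r := by
    intro k
    induction k with
    | zero => rw [h0]; exact ⟨by simp, hx0⟩
    | succ k ih =>
      have hmem : xseq k ∈ closedBall xstar r := mem_closedBall_iff_norm.mpr ih.2
      have hstep : xseq (k + 1) = g (xseq k) := hrec k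
      have h6 : ‖xseq (k + 1) - xstar‖ ≤ L * ‖xseq k - xstar‖ := by
        rw [hstep]; exact hcontract _ hmem
      constructor
      · calc ‖xseq (k + 1) - xstar‖ ≤ L * ‖xseq k - xstar‖ := h6
          _ ≤ L * (L ^ k * ‖x0 - xstar‖) := by
              exact mul_le_mul_of_nonneg_left ih.1 hLpos.le
          _ = L ^ (k + 1) * ‖x0 - xstar‖ := by ring
      · calc ‖xseq (k + 1) - xstar‖ ≤ L * ‖xseq k - xstar‖ := h6
          _ ≤ L * r := mul_le_mul_of_nonneg_left ih.2 hLpos.le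
          _ ≤ r := by nlinarith
  exact ⟨fun k => (main k).2, fun k => (main k).1⟩
end

section
/- Let g : ℝⁿ → ℝᵐ be twice continuously differentiable and let (x⁽ᵏ⁾) be a sequence converging to x* ∈ ℝⁿ such that Dg(x⁽ᵏ⁾)(x⁽ᵏ⁺¹⁾ − x⁽ᵏ⁾) = −g(x⁽ᵏ⁾) for every k. Suppose the convergence is linear with rate L ∈ (0,1), i.e. there is C ≥ 0 with ‖x⁽ᵏ⁾ − x*‖ ≤ C Lᵏ for all k. Then the constraint values converge to zero at the improved rate L²: there exists C′ ≥ 0 such that ‖g(x⁽ᵏ⁾)‖ ≤ C′ L²ᵏ for all k. -/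
/-- If `g : ℝⁿ → ℝᵐ` is twice continuously differentiable and the sequence
`x⁽ᵏ⁾` converges linearly with rate `L ∈ (0,1)` to `x*` while satisfying the Newton-type
condition `Dg(x⁽ᵏ⁾)(x⁽ᵏ⁺¹⁾ − x⁽ᵏ⁾) = −g(x⁽ᵏ⁾)`, then the constraint values converge to zero
at the improved rate `L²`: there is `C′ ≥ 0` with `‖g(x⁽ᵏ⁾)‖ ≤ C′ (L²)ᵏ` for all `k`. -/
theorem newton_condition_constraints_improved_rate {n m : ℕ}
    (g : EuclideanSpace ℝ (Fin n) → EuclideanSpace ℝ (Fin m)) (hg : ContDiff ℝ 2 g)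
    (x : ℕ → EuclideanSpace ℝ (Fin n)) (xstar : EuclideanSpace ℝ (Fin n))
    (hconv : Filter.Tendsto x Filter.atTop (nhds xstar))
    (hstep : ∀ k, fderiv ℝ g (x k) (x (k + 1) - x k) = - g (x k))
    (L : ℝ) (hL0 : 0 < L) (hL1 : L < 1)
    (C : ℝ) (hC : 0 ≤ C) (hrate : ∀ k, ‖x k - xstar‖ ≤ C * L ^ k) :
    ∃ C' : ℝ, 0 ≤ C' ∧ ∀ k, ‖g (x k)‖ ≤ C' * (L ^ 2) ^ k := by
  set f' := fderiv ℝ g with hf'def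
  have hgd : Differentiable ℝ g := hg.differentiable (by norm_num)
  have hf'c : ContDiff ℝ 1 f' := hg.fderiv_right (m := 1) (by norm_num)
  have hf'd : Differentiable ℝ f' := hf'c.differentiable (by norm_num)
  set B := Metric.closedBall xstar C with hBdef
  have hBc : IsCompact B := isCompact_closedBall _ _
  have hBconv : Convex ℝ B := convex_closedBall _ _
  have hmem : ∀ k, x k ∈ B := by
    intro k
    rw [hBdef, Metric.mem_closedBall, dist_eq_norm]
    calc ‖x k - xstar‖ ≤ C * L ^ k := hrate k
      _ ≤ C * 1 := by gcongr; exact pow_le_one₀ hL0.le hL1.le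
      _ = C := mul_one C
  obtain ⟨M, hM0, hMb⟩ : ∃ M, 0 ≤ M ∧ ∀ z ∈ B, ‖fderiv ℝ f' z‖ ≤ M := by
    obtain ⟨M, hM⟩ := hBc.exists_bound_of_continuousOn
      ((hf'c.continuous_fderiv (by norm_num)).continuousOn)
    exact ⟨max M 0, le_max_right _ _, fun z hz => (hM z hz).trans (le_max_left _ _)⟩
  have hlip : ∀ a ∈ B, ∀ b ∈ B, ‖f' b - f' a‖ ≤ M * ‖b - a‖ := fun a ha b hb =>
    hBconv.norm_image_sub_le_of_norm_fderiv_le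
      (fun z _ => hf'd z) hMb ha hb
  have htaylor : ∀ a ∈ B, ∀ b ∈ B, ‖g b - g a - f' a (b - a)‖ ≤ M * ‖b - a‖ * ‖b - a‖ := by
    intro a ha b hb
    have hseg : segment ℝ a b ⊆ B := hBconv.segment_subset ha hb
    have hdist : ∀ z ∈ segment ℝ a b, ‖z - a‖ ≤ ‖b - a‖ := by
      intro z hz
      rw [segment_eq_image'] at hz
      obtain ⟨t, ⟨ht0, ht1⟩, rfl⟩ := hz
      rw [add_sub_cancel_left, norm_smul, Real.norm_eq_abs, abs_of_nonneg ht0]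
      nlinarith [norm_nonneg (b - a)]
    have key := Convex.norm_image_sub_le_of_norm_hasFDerivWithin_le
      (f := fun z => g z - f' a z) (f' := fun z => f' z - f' a)
      (s := segment ℝ a b) (C := M * ‖b - a‖)
      (fun z _ => (((hgd z).hasFDerivAt).sub (f' a).hasFDerivAt).hasFDerivWithinAt)
      (fun z hz => (hlip a ha z (hseg hz)).trans (by
        have := hdist z hz
        nlinarith))
      (convex_segment a b) (left_mem_segment ℝ a b) (right_mem_segment ℝ a b)
    calc ‖g b - g a - f' a (b - a)‖
        = ‖(g b - f' a b) - (g a - f' a a)‖ := by rw [map_sub]; abel_nf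
      _ ≤ M * ‖b - a‖ * ‖b - a‖ := key
  have hstep2 : ∀ k, ‖g (x (k + 1))‖ ≤ M * (2 * C * L ^ k) ^ 2 := by
    intro k
    have hd : ‖x (k + 1) - x k‖ ≤ 2 * C * L ^ k := by
      calc ‖x (k + 1) - x k‖ = ‖(x (k + 1) - xstar) - (x k - xstar)‖ := by abel_nf
        _ ≤ ‖x (k + 1) - xstar‖ + ‖x k - xstar‖ := norm_sub_le _ _
        _ ≤ C * L ^ (k + 1) + C * L ^ k := add_le_add (hrate _) (hrate _)
        _ ≤ 2 * C * L ^ k := by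
            have : L ^ (k + 1) ≤ L ^ k := pow_le_pow_of_le_one hL0.le hL1.le (by omega)
            nlinarith [pow_pos hL0 k]
    have := htaylor (x k) (hmem k) (x (k + 1)) (hmem (k + 1))
    rw [hstep k] at this
    have h2 : ‖g (x (k + 1))‖ ≤ M * ‖x (k + 1) - x k‖ * ‖x (k + 1) - x k‖ := by
      simpa [sub_neg_eq_add, sub_add_cancel] using this
    calc ‖g (x (k + 1))‖ ≤ M * ‖x (k + 1) - x k‖ * ‖x (k + 1) - x k‖ := h2
      _ ≤ M * (2 * C * L ^ k) ^ 2 := by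
          have h0 : (0:ℝ) ≤ ‖x (k+1) - x k‖ := norm_nonneg _
          have hb0 : (0:ℝ) ≤ 2 * C * L ^ k := by positivity
          nlinarith [mul_le_mul hd hd h0 hb0, hM0]
  refine ⟨‖g (x 0)‖ + 4 * M * C ^ 2 / L ^ 2, by positivity, ?_⟩
  intro k
  cases k with
  | zero => simp; positivity
  | succ j =>
    have hL2 : (0:ℝ) < L ^ 2 := by positivity
    calc ‖g (x (j + 1))‖ ≤ M * (2 * C * L ^ j) ^ 2 := hstep2 j
      _ = 4 * M * C ^ 2 / L ^ 2 * (L ^ 2) ^ (j + 1) := by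
          field_simp
          ring
      _ ≤ (‖g (x 0)‖ + 4 * M * C ^ 2 / L ^ 2) * (L ^ 2) ^ (j + 1) := by
          have : (0:ℝ) ≤ (L ^ 2) ^ (j + 1) := by positivity
          nlinarith [norm_nonneg (g (x 0))]
end

section
/- Let g : ℝⁿ → ℝᵐ be continuously differentiable and let x* be a regular point of the set M = {x ∈ ℝⁿ : g(x) = 0}, i.e. g(x*) = 0 and Dg(x*) has full rank m. Then there exist a neighborhood U of x* and constants c₁, c₂ > 0 such that for every x ∈ U, c₁ · dist(x, M) ≤ ‖g(x)‖ ≤ c₂ · dist(x, M), where dist(x, M) = inf{‖x − y‖ : y ∈ M}; in particular ‖g(x)‖ is of the same order of magnitude as the distance from x to the constraint manifold M. -/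
/-- If `g : ℝⁿ → ℝᵐ` is continuously differentiable and `x*` is a regular point
of `M = {x : g(x) = 0}` (i.e. `g(x*) = 0` and `Dg(x*)` has full rank `m`, equivalently the
derivative is surjective), then there are a neighborhood `U` of `x*` and constants
`c₁, c₂ > 0` such that `c₁ · dist(x, M) ≤ ‖g(x)‖ ≤ c₂ · dist(x, M)` for all `x ∈ U`. -/
theorem norm_constraint_comparable_to_dist {n m : ℕ}
    (g : EuclideanSpace ℝ (Fin n) → EuclideanSpace ℝ (Fin m)) (hg : ContDiff ℝ 1 g)
    (xstar : EuclideanSpace ℝ (Fin n)) (hfeas : g xstar = 0)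
    (hreg : Function.Surjective (fderiv ℝ g xstar)) :
    ∃ U ∈ nhds xstar, ∃ c₁ : ℝ, 0 < c₁ ∧ ∃ c₂ : ℝ, 0 < c₂ ∧
      ∀ x ∈ U,
        c₁ * Metric.infDist x {y : EuclideanSpace ℝ (Fin n) | g y = 0} ≤ ‖g x‖ ∧
        ‖g x‖ ≤ c₂ * Metric.infDist x {y : EuclideanSpace ℝ (Fin n) | g y = 0} := by
  classical
  set M : Set (EuclideanSpace ℝ (Fin n)) := {y | g y = 0} with hMdef
  have hxM : xstar ∈ M := hfeas
  have hMne : M.Nonempty := ⟨xstar, hxM⟩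
  set A := fderiv ℝ g xstar with hA
  have hAsurj : A.range = ⊤ := LinearMap.range_eq_top.2 hreg
  set f'symm := A.nonlinearRightInverseOfSurjective hAsurj with hf'symm
  have hnorm : 0 < f'symm.nnnorm :=
    ContinuousLinearMap.nonlinearRightInverseOfSurjective_nnnorm_pos A hAsurj
  set c : NNReal := f'symm.nnnorm⁻¹ / 2 with hcdef
  have hc0 : 0 < c := by
    have : (0 : NNReal) < f'symm.nnnorm⁻¹ := by positivity
    positivity
  have hcR : (0 : ℝ) < (c : ℝ) := hc0
  have hchalf : ((f'symm.nnnorm : ℝ)⁻¹ - (c : ℝ)) = (c : ℝ) := by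
    have : (c : ℝ) = (f'symm.nnnorm : ℝ)⁻¹ / 2 := by
      rw [hcdef]; push_cast; ring
    rw [this]; ring
  have hstrict : HasStrictFDerivAt g A xstar :=
    (hg.contDiffAt (x := xstar)).hasStrictFDerivAt one_ne_zero
  obtain ⟨s, hs, happrox⟩ := hstrict.approximates_deriv_on_nhds (Or.inr hc0)
  obtain ⟨r, hr0, hrs⟩ := Metric.nhds_basis_closedBall.mem_iff.1 hs
  -- choose δ ≤ r/4 such that on ball xstar δ, ‖g x‖ ≤ c * (r/4)
  have hcr4 : (0 : ℝ) < (c : ℝ) * (r / 4) := by positivity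
  have hcont : ContinuousAt g xstar := hg.continuous.continuousAt
  have hev : ∀ᶠ x in nhds xstar, ‖g x‖ < (c : ℝ) * (r / 4) := by
    have : Filter.Tendsto g (nhds xstar) (nhds 0) := by
      have h := hcont.tendsto
      rwa [hfeas] at h
    have := this (Metric.ball_mem_nhds (0 : EuclideanSpace ℝ (Fin m)) hcr4)
    filter_upwards [this] with x hx
    simpa [dist_zero_right] using Metric.mem_ball.1 hx
  obtain ⟨δ, hδ0, hδball⟩ := Metric.nhds_basis_ball.mem_iff.1
    (Filter.inter_mem hev (Metric.ball_mem_nhds xstar (show (0:ℝ) < r/4 by linarith)))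
  -- U := ball xstar δ; shrink δ implicitly via hδball
  set K : NNReal := ‖A‖₊ + c with hK
  have hK0 : (0 : ℝ) < (K : ℝ) :=
    NNReal.coe_pos.2 (add_pos_of_nonneg_of_pos zero_le hc0)
  refine ⟨Metric.ball xstar δ, Metric.ball_mem_nhds _ hδ0, (c : ℝ), hcR, (K : ℝ), hK0,
    fun x hx => ?_⟩
  have hxprop := hδball hx
  have hgx_small : ‖g x‖ < (c : ℝ) * (r / 4) := hxprop.1
  have hx_close : dist x xstar < r / 4 := Metric.mem_ball.1 hxprop.2
  have hxs : x ∈ s := hrs (Metric.mem_closedBall.2 (by linarith [hx_close]))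
  have hxstars : xstar ∈ s := hrs (Metric.mem_closedBall_self hr0.le)
  constructor
  · -- lower bound: c * infDist x M ≤ ‖g x‖
    set ε : ℝ := ‖g x‖ / (c : ℝ) with hε
    have hε0 : 0 ≤ ε := by positivity
    have hεr : ε ≤ r / 4 := by
      rw [hε, div_le_iff₀ hcR]
      nlinarith [hgx_small]
    have hsub : Metric.closedBall x ε ⊆ s := by
      intro y hy
      apply hrs
      have h1 : dist y x ≤ ε := Metric.mem_closedBall.1 hy
      have h2 : dist y xstar ≤ dist y x + dist x xstar := dist_triangle _ _ _
      exact Metric.mem_closedBall.2 (by linarith)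
    have hsurj := happrox.surjOn_closedBall_of_nonlinearRightInverse f'symm hε0 hsub
    have h0mem : (0 : EuclideanSpace ℝ (Fin m)) ∈
        Metric.closedBall (g x) (((f'symm.nnnorm : ℝ)⁻¹ - (c : ℝ)) * ε) := by
      rw [Metric.mem_closedBall, dist_zero_left, hchalf, hε,
        mul_div_cancel₀ _ (ne_of_gt hcR)]
    obtain ⟨y, hy, hgy⟩ := hsurj h0mem
    have hyM : y ∈ M := hgy
    have hinf : Metric.infDist x M ≤ ε :=
      le_trans (Metric.infDist_le_dist_of_mem hyM)
        (by simpa [dist_comm] using Metric.mem_closedBall.1 hy)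
    calc (c : ℝ) * Metric.infDist x M ≤ (c : ℝ) * ε := by
          exact mul_le_mul_of_nonneg_left hinf (le_of_lt hcR)
      _ = ‖g x‖ := by rw [hε, mul_div_cancel₀ _ (ne_of_gt hcR)]
  · -- upper bound: ‖g x‖ ≤ K * infDist x M
    have hlip := happrox.lipschitz
    have key : ∀ y ∈ M, ‖g x‖ ≤ (K : ℝ) * dist x y := by
      intro y hyM
      by_cases hfar : dist x y < r / 2
      · have hys : y ∈ s := by
          apply hrs
          have : dist y xstar ≤ dist y x + dist x xstar := dist_triangle _ _ _
          rw [dist_comm y x] at this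
          exact Metric.mem_closedBall.2 (by linarith)
        have := hlip.dist_le_mul ⟨x, hxs⟩ ⟨y, hys⟩
        simpa [Set.restrict, Subtype.dist_eq, hyM.out, dist_zero_right, hK] using this
      · push_neg at hfar
        have h1 : ‖g x‖ ≤ (K : ℝ) * dist x xstar := by
          have := hlip.dist_le_mul ⟨x, hxs⟩ ⟨xstar, hxstars⟩
          simpa [Set.restrict, Subtype.dist_eq, hfeas, dist_zero_right, hK] using this
        have h2 : (K : ℝ) * dist x xstar ≤ (K : ℝ) * dist x y := by
          apply mul_le_mul_of_nonneg_left _ (le_of_lt hK0)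
          linarith
        linarith
    have hKinf : ‖g x‖ / (K : ℝ) ≤ Metric.infDist x M := by
      by_contra hlt
      push_neg at hlt
      obtain ⟨y, hyM, hy⟩ := (Metric.infDist_lt_iff hMne).1 hlt
      have h1 := key y hyM
      have h2 : dist x y * (K : ℝ) < ‖g x‖ := (lt_div_iff₀ hK0).1 hy
      nlinarith
    calc ‖g x‖ = (K : ℝ) * (‖g x‖ / (K : ℝ)) := by field_simp
      _ ≤ (K : ℝ) * Metric.infDist x M := mul_le_mul_of_nonneg_left hKinf (le_of_lt hK0)
end

section
/- Let f : ℝⁿ → ℝ and g : ℝⁿ → ℝᵐ (m < n) be twice continuously differentiable, and let x* be a regular point satisfying the KKT conditions with multiplier λ* ∈ ℝᵐ. Define, for x near x*, P(x) = I − ∇g(x)[Dg(x)∇g(x)]⁻¹Dg(x), K(x) = ∇g(x)[Dg(x)∇g(x)]⁻¹, and the iteration map S(x) = x − η P(x) ∇f(x) − K(x) g(x) for a fixed η > 0. Then S is well defined and continuously differentiable on a neighborhood of x*, and its Jacobian at x* is DS(x*) = P(x*) (I − η H*), where H* = D²f(x*) + Σᵢ₌₁ᵐ λ*ᵢ D²gᵢ(x*).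 -/
open Matrix

/-- The Jacobian matrix `Dg(x)` of `g : ℝⁿ → ℝᵐ` at `x`. -/
noncomputable def jacobianMatrix {n m : ℕ} (g : (Fin n → ℝ) → (Fin m → ℝ))
    (x : Fin n → ℝ) : Matrix (Fin m) (Fin n) ℝ :=
  fun i j => fderiv ℝ g x (Pi.single j 1) i

/-- The gradient vector `∇f(x)` of `f : ℝⁿ → ℝ` at `x`. -/
noncomputable def gradientVec {n : ℕ} (f : (Fin n → ℝ) → ℝ)
    (x : Fin n → ℝ) : Fin n → ℝ :=
  fun j => fderiv ℝ f x (Pi.single j 1)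

/-- The Hessian matrix `D²f(x)` of `f : ℝⁿ → ℝ` at `x`. -/
noncomputable def hessianMatrix {n : ℕ} (f : (Fin n → ℝ) → ℝ)
    (x : Fin n → ℝ) : Matrix (Fin n) (Fin n) ℝ :=
  fun i j => fderiv ℝ (fun y => fderiv ℝ f y (Pi.single j 1)) x (Pi.single i 1)

/-- The projection matrix `P(x) = I − ∇g(x)[Dg(x)∇g(x)]⁻¹Dg(x)`. -/
noncomputable def projMatrix {n m : ℕ} (g : (Fin n → ℝ) → (Fin m → ℝ))
    (x : Fin n → ℝ) : Matrix (Fin n) (Fin n) ℝ :=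
  1 - (jacobianMatrix g x)ᵀ * (jacobianMatrix g x * (jacobianMatrix g x)ᵀ)⁻¹
        * jacobianMatrix g x

/-- The right-inverse matrix `K(x) = ∇g(x)[Dg(x)∇g(x)]⁻¹`. -/
noncomputable def rightInvMatrix {n m : ℕ} (g : (Fin n → ℝ) → (Fin m → ℝ))
    (x : Fin n → ℝ) : Matrix (Fin n) (Fin m) ℝ :=
  (jacobianMatrix g x)ᵀ * (jacobianMatrix g x * (jacobianMatrix g x)ᵀ)⁻¹

/-! ### Auxiliary lemmas -/

section helpers
variable {E : Type*} [NormedAddCommGroup E] [NormedSpace ℝ E]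

lemma clm_comp_fderiv_apply {F G : Type*} [NormedAddCommGroup F] [NormedSpace ℝ F]
    [NormedAddCommGroup G] [NormedSpace ℝ G]
    (e : F →L[ℝ] G) {c : E → F} {x : E} (hc : DifferentiableAt ℝ c x) (u : E) :
    fderiv ℝ (fun y => e (c y)) x u = e (fderiv ℝ c x u) := by
  rw [show (fun y => e (c y)) = ⇑e ∘ c from rfl,
    (e.hasFDerivAt.comp x hc.hasFDerivAt).fderiv]
  rfl

lemma contDiffAt_det_comp {l : ℕ} {N : E → Matrix (Fin l) (Fin l) ℝ} {x : E}
    (h : ∀ i j, ContDiffAt ℝ 1 (fun y => N y i j) x) :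
    ContDiffAt ℝ 1 (fun y => (N y).det) x := by
  simp only [Matrix.det_apply']
  exact ContDiffAt.sum fun σ _ =>
    ContDiffAt.mul contDiffAt_const (contDiffAt_prod fun i _ => h (σ i) i)

lemma contDiffAt_adjugate_comp {l : ℕ} {N : E → Matrix (Fin l) (Fin l) ℝ} {x : E}
    (h : ∀ i j, ContDiffAt ℝ 1 (fun y => N y i j) x) (i j : Fin l) :
    ContDiffAt ℝ 1 (fun y => (N y).adjugate i j) x := by
  simp only [Matrix.adjugate_apply]
  apply contDiffAt_det_comp
  intro a b
  rcases eq_or_ne a j with rfl | hne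
  · simp only [Matrix.updateRow_self]
    exact contDiffAt_const
  · simp only [Matrix.updateRow_ne hne]
    exact h a b

lemma hasDerivAt_line (x v : E) (t : ℝ) :
    HasDerivAt (fun s : ℝ => x + s • v) v t := by
  simpa using ((hasDerivAt_id t).smul_const v).const_add x

lemma hasDerivAt_comp_line {F : Type*} [NormedAddCommGroup F] [NormedSpace ℝ F]
    {h : E → F} {x : E} (v : E) (hh : DifferentiableAt ℝ h x) :
    HasDerivAt (fun t : ℝ => h (x + t • v)) (fderiv ℝ h x v) 0 := by
  have h0 : x + (0:ℝ) • v = x := by simp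
  exact HasFDerivAt.comp_hasDerivAt 0 (h0.symm ▸ hh.hasFDerivAt) (hasDerivAt_line x v 0)

variable {a b c : ℕ}

lemma matmul_deriv {F : ℝ → Matrix (Fin a) (Fin b) ℝ} {G : ℝ → Matrix (Fin b) (Fin c) ℝ}
    {F' : Matrix (Fin a) (Fin b) ℝ} {G' : Matrix (Fin b) (Fin c) ℝ} {t : ℝ}
    (hF : ∀ i j, HasDerivAt (fun s => F s i j) (F' i j) t)
    (hG : ∀ i j, HasDerivAt (fun s => G s i j) (G' i j) t) (i : Fin a) (j : Fin c) :
    HasDerivAt (fun s => (F s * G s) i j) ((F' * G t + F t * G') i j) t := by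
  simp only [Matrix.mul_apply, Matrix.add_apply]
  have := HasDerivAt.fun_sum (u := Finset.univ) (A := fun k s => F s i k * G s k j)
    (A' := fun k => F' i k * G t k j + F t i k * G' k j)
    (fun k _ => (hF i k).mul (hG k j))
  simpa [Finset.sum_add_distrib] using this

lemma mulVec_deriv {F : ℝ → Matrix (Fin a) (Fin b) ℝ} {w : ℝ → Fin b → ℝ}
    {F' : Matrix (Fin a) (Fin b) ℝ} {w' : Fin b → ℝ} {t : ℝ}
    (hF : ∀ i j, HasDerivAt (fun s => F s i j) (F' i j) t)
    (hw : ∀ j, HasDerivAt (fun s => w s j) (w' j) t) (i : Fin a) :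
    HasDerivAt (fun s => (F s).mulVec (w s) i) ((F'.mulVec (w t) + (F t).mulVec w') i) t := by
  simp only [Matrix.mulVec, dotProduct, Pi.add_apply]
  have := HasDerivAt.fun_sum (u := Finset.univ) (A := fun k s => F s i k * w s k)
    (A' := fun k => F' i k * w t k + F t i k * w' k)
    (fun k _ => (hF i k).mul (hw k))
  simpa [Finset.sum_add_distrib] using this

end helpers

section fin_helpers
variable {n m : ℕ}

lemma clm_apply_basis (φ : (Fin n → ℝ) →L[ℝ] ℝ) (v : Fin n → ℝ) :
    φ v = ∑ k, v k * φ (Pi.single k 1) := by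
  conv_lhs => rw [← Finset.univ_sum_single v]
  rw [map_sum]
  refine Finset.sum_congr rfl fun k _ => ?_
  have : Pi.single k (v k) = v k • (Pi.single k 1 : Fin n → ℝ) := by
    rw [← Pi.single_smul, smul_eq_mul, mul_one]
  rw [this, _root_.map_smul, smul_eq_mul]

lemma jac_entry_contDiff {g : (Fin n → ℝ) → (Fin m → ℝ)} (hg : ContDiff ℝ 2 g)
    (i : Fin m) (j : Fin n) : ContDiff ℝ 1 (fun x => jacobianMatrix g x i j) := by
  have h1 : ContDiff ℝ 1 (fderiv ℝ g) := hg.fderiv_right (by norm_num)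
  exact (((ContinuousLinearMap.proj (R := ℝ) (φ := fun _ : Fin m => ℝ) i).comp
      ((ContinuousLinearMap.apply ℝ (Fin m → ℝ) (Pi.single j 1)))).contDiff.comp h1)

lemma grad_entry_contDiff {f : (Fin n → ℝ) → ℝ} (hf : ContDiff ℝ 2 f)
    (j : Fin n) : ContDiff ℝ 1 (fun x => gradientVec f x j) := by
  have h1 : ContDiff ℝ 1 (fderiv ℝ f) := hf.fderiv_right (by norm_num)
  exact ((ContinuousLinearMap.apply ℝ ℝ (Pi.single j 1)).contDiff.comp h1)

lemma snd_fderiv_eq {h : (Fin n → ℝ) → ℝ} (hh : ContDiff ℝ 2 h) (x u : Fin n → ℝ)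
    (j : Fin n) :
    fderiv ℝ (fun y => fderiv ℝ h y (Pi.single j 1)) x u
      = fderiv ℝ (fderiv ℝ h) x u (Pi.single j 1) := by
  have hd : DifferentiableAt ℝ (fderiv ℝ h) x :=
    ((hh.fderiv_right (m := 1) (by norm_num)).differentiable one_ne_zero).differentiableAt
  exact clm_comp_fderiv_apply (ContinuousLinearMap.apply ℝ ℝ (Pi.single j 1)) hd u

lemma hessian_symm {h : (Fin n → ℝ) → ℝ} (hh : ContDiff ℝ 2 h) (x : Fin n → ℝ)
    (i j : Fin n) : hessianMatrix h x i j = hessianMatrix h x j i := by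
  have hs := (hh.contDiffAt.isSymmSndFDerivAt (by simp) : IsSymmSndFDerivAt ℝ h x)
  show fderiv ℝ (fun y => fderiv ℝ h y (Pi.single j 1)) x (Pi.single i 1)
      = fderiv ℝ (fun y => fderiv ℝ h y (Pi.single i 1)) x (Pi.single j 1)
  rw [snd_fderiv_eq hh, snd_fderiv_eq hh]
  exact hs.eq _ _

lemma fderiv_fderiv_line {h : (Fin n → ℝ) → ℝ} (hh : ContDiff ℝ 2 h)
    (x v : Fin n → ℝ) (j : Fin n) :
    fderiv ℝ (fun y => fderiv ℝ h y (Pi.single j 1)) x v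
      = ∑ k, v k * hessianMatrix h x k j := by
  rw [snd_fderiv_eq hh]
  have hv : v = ∑ k, Pi.single k (v k) := (Finset.univ_sum_single v).symm
  conv_lhs => rw [hv]
  rw [map_sum, ContinuousLinearMap.sum_apply]
  refine Finset.sum_congr rfl fun k _ => ?_
  have : Pi.single k (v k) = v k • (Pi.single k 1 : Fin n → ℝ) := by
    rw [← Pi.single_smul, smul_eq_mul, mul_one]
  rw [this, _root_.map_smul, ContinuousLinearMap.smul_apply, smul_eq_mul,
    ← snd_fderiv_eq hh]
  rfl

lemma jac_entry_eq {g : (Fin n → ℝ) → (Fin m → ℝ)} (hg : Differentiable ℝ g)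
    (x : Fin n → ℝ) (i : Fin m) (j : Fin n) :
    jacobianMatrix g x i j = fderiv ℝ (fun y => g y i) x (Pi.single j 1) := by
  show fderiv ℝ g x (Pi.single j 1) i = _
  exact (clm_comp_fderiv_apply (ContinuousLinearMap.proj (R := ℝ)
    (φ := fun _ : Fin m => ℝ) i) (hg x) (Pi.single j 1)).symm

lemma isUnit_det_gram (A : Matrix (Fin m) (Fin n) ℝ) (h : A.rank = m) :
    IsUnit (A * Aᵀ).det := by
  have h1 : (A * Aᵀ).rank = m := by rw [Matrix.rank_self_mul_transpose, h]
  have h2 : LinearMap.range (A * Aᵀ).mulVecLin = ⊤ := by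
    apply Submodule.eq_top_of_finrank_eq
    show (A * Aᵀ).rank = _
    rw [h1, Module.finrank_pi, Fintype.card_fin]
  have h3 : Function.Surjective (A * Aᵀ).mulVec := by
    intro y
    obtain ⟨x, hx⟩ := LinearMap.range_eq_top.mp h2 y
    exact ⟨x, by rw [← Matrix.mulVecLin_apply]; exact hx⟩
  exact (Matrix.isUnit_iff_isUnit_det _).mp (Matrix.mulVec_surjective_iff_isUnit.mp h3)

end fin_helpers
/-- Under the KKT conditions at a regular point `x*`, the iteration map
`S(x) = x − η P(x)∇f(x) − K(x) g(x)` is well defined and continuously differentiable near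
`x*`, and its Jacobian at `x*` is `DS(x*) = P(x*)(I − η H*)`, where
`H* = D²f(x*) + Σᵢ λ*ᵢ D²gᵢ(x*)`. -/
theorem iteration_map_jacobian_at_solution {n m : ℕ} (hmn : m < n)
    (η : ℝ) (hη : 0 < η)
    (f : (Fin n → ℝ) → ℝ) (g : (Fin n → ℝ) → (Fin m → ℝ))
    (hf : ContDiff ℝ 2 f) (hg : ContDiff ℝ 2 g)
    (xstar : Fin n → ℝ) (lamstar : Fin m → ℝ)
    (hreg : (jacobianMatrix g xstar).rank = m)
    (hfeas : g xstar = 0)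
    (hkkt : gradientVec f xstar + (jacobianMatrix g xstar)ᵀ.mulVec lamstar = 0) :
    ∃ U ∈ nhds xstar,
      ContDiffOn ℝ 1
        (fun x => x - η • (projMatrix g x).mulVec (gradientVec f x)
          - (rightInvMatrix g x).mulVec (g x)) U ∧
      ∀ v : Fin n → ℝ,
        fderiv ℝ
          (fun x => x - η • (projMatrix g x).mulVec (gradientVec f x)
            - (rightInvMatrix g x).mulVec (g x)) xstar v =
        (projMatrix g xstar *
          (1 - η • (hessianMatrix f xstar
            + ∑ i, lamstar i • hessianMatrix (fun y => g y i) xstar))).mulVec v := by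
  classical
  -- entry smoothness
  have hAe : ∀ i j, ContDiff ℝ 1 (fun x => jacobianMatrix g x i j) := jac_entry_contDiff hg
  have hbe : ∀ j, ContDiff ℝ 1 (fun x => gradientVec f x j) := grad_entry_contDiff hf
  have hgi2 : ∀ i, ContDiff ℝ 2 (fun y => g y i) := fun i =>
    (ContinuousLinearMap.proj (R := ℝ) (φ := fun _ : Fin m => ℝ) i).contDiff.comp hg
  have hMe : ∀ i j, ContDiff ℝ 1
      (fun x => (jacobianMatrix g x * (jacobianMatrix g x)ᵀ) i j) := by
    intro i j
    have : ContDiff ℝ 1 (fun x => ∑ k, jacobianMatrix g x i k * jacobianMatrix g x j k) :=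
      ContDiff.sum fun k _ => (hAe i k).mul (hAe j k)
    simpa only [Matrix.mul_apply, Matrix.transpose_apply] using this
  have hde : ∀ x₀, ContDiffAt ℝ 1
      (fun x => (jacobianMatrix g x * (jacobianMatrix g x)ᵀ).det) x₀ := fun x₀ =>
    contDiffAt_det_comp (fun i j => (hMe i j).contDiffAt)
  have hdet_cont : Continuous (fun x => (jacobianMatrix g x * (jacobianMatrix g x)ᵀ).det) :=
    continuous_iff_continuousAt.mpr fun x₀ => (hde x₀).continuousAt
  have hd0 : (jacobianMatrix g xstar * (jacobianMatrix g xstar)ᵀ).det ≠ 0 :=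
    (isUnit_det_gram _ hreg).ne_zero
  set U : Set (Fin n → ℝ) :=
    {x | (jacobianMatrix g x * (jacobianMatrix g x)ᵀ).det ≠ 0} with hU
  have hUopen : IsOpen U := by
    have : U = (fun x => (jacobianMatrix g x * (jacobianMatrix g x)ᵀ).det) ⁻¹' {0}ᶜ := by
      ext x; simp [hU]
    rw [this]
    exact (isOpen_compl_singleton).preimage hdet_cont
  have hUx : xstar ∈ U := hd0
  -- entries of the inverse matrix
  have hMinv_e : ∀ y ∈ U, ∀ (i j : Fin m), ContDiffAt ℝ 1
      (fun x => (jacobianMatrix g x * (jacobianMatrix g x)ᵀ)⁻¹ i j) y := by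
    intro y hy i j
    have h1 : ∀ x : Fin n → ℝ, (jacobianMatrix g x * (jacobianMatrix g x)ᵀ)⁻¹ i j
        = ((jacobianMatrix g x * (jacobianMatrix g x)ᵀ).det)⁻¹
            * (jacobianMatrix g x * (jacobianMatrix g x)ᵀ).adjugate i j := by
      intro x
      rw [Matrix.inv_def, Ring.inverse_eq_inv']
      simp [Matrix.smul_apply, smul_eq_mul]
    simp only [h1]
    exact ((hde y).inv hy).mul
      (contDiffAt_adjugate_comp (fun i j => (hMe i j).contDiffAt) i j)
  have hKe : ∀ y ∈ U, ∀ (j : Fin n) (i : Fin m), ContDiffAt ℝ 1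
      (fun x => rightInvMatrix g x j i) y := by
    intro y hy j i
    have h1 : ∀ x : Fin n → ℝ, rightInvMatrix g x j i
        = ∑ p, jacobianMatrix g x p j * (jacobianMatrix g x * (jacobianMatrix g x)ᵀ)⁻¹ p i := by
      intro x
      simp [rightInvMatrix, Matrix.mul_apply, Matrix.transpose_apply]
    simp only [h1]
    exact ContDiffAt.sum fun p _ => ((hAe p j).contDiffAt).mul (hMinv_e y hy p i)
  have hPe : ∀ y ∈ U, ∀ (j k : Fin n), ContDiffAt ℝ 1
      (fun x => projMatrix g x j k) y := by
    intro y hy j k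
    have h1 : ∀ x : Fin n → ℝ, projMatrix g x j k
        = (1 : Matrix (Fin n) (Fin n) ℝ) j k
          - ∑ p, rightInvMatrix g x j p * jacobianMatrix g x p k := by
      intro x
      simp [projMatrix, rightInvMatrix, Matrix.sub_apply, Matrix.mul_apply]
    simp only [h1]
    exact ContDiffAt.sub contDiffAt_const
      (ContDiffAt.sum fun p _ => (hKe y hy j p).mul (hAe p k).contDiffAt)
  have hScoord : ∀ (x : Fin n → ℝ) (j : Fin n),
      (x - η • (projMatrix g x).mulVec (gradientVec f x)
        - (rightInvMatrix g x).mulVec (g x)) j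
      = x j - η * ((projMatrix g x).mulVec (gradientVec f x) j)
        - (rightInvMatrix g x).mulVec (g x) j := by
    intro x j
    simp [Pi.sub_apply, Pi.smul_apply, smul_eq_mul]
  have hgc : ∀ i, ContDiff ℝ 1 (fun x => g x i) := fun i => (hgi2 i).of_le (by norm_num)
  have hSentry : ∀ y ∈ U, ∀ (j : Fin n), ContDiffAt ℝ 1
      (fun x => (x - η • (projMatrix g x).mulVec (gradientVec f x)
        - (rightInvMatrix g x).mulVec (g x)) j) y := by
    intro y hy j
    simp only [hScoord]
    have hmv1 : ContDiffAt ℝ 1 (fun x => (projMatrix g x).mulVec (gradientVec f x) j) y := by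
      have h1 : ∀ x : Fin n → ℝ, (projMatrix g x).mulVec (gradientVec f x) j
          = ∑ k, projMatrix g x j k * gradientVec f x k := by
        intro x; simp [Matrix.mulVec, dotProduct]
      simp only [h1]
      exact ContDiffAt.sum fun k _ => (hPe y hy j k).mul (hbe k).contDiffAt
    have hmv2 : ContDiffAt ℝ 1 (fun x => (rightInvMatrix g x).mulVec (g x) j) y := by
      have h1 : ∀ x : Fin n → ℝ, (rightInvMatrix g x).mulVec (g x) j
          = ∑ i, rightInvMatrix g x j i * g x i := by
        intro x; simp [Matrix.mulVec, dotProduct]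
      simp only [h1]
      exact ContDiffAt.sum fun i _ => (hKe y hy j i).mul (hgc i).contDiffAt
    exact (((ContinuousLinearMap.proj (R := ℝ) (φ := fun _ : Fin n => ℝ)
      j).contDiff.contDiffAt).sub (contDiffAt_const.mul hmv1)).sub hmv2
  refine ⟨U, hUopen.mem_nhds hUx, ?_, ?_⟩
  · intro y hy
    exact (contDiffAt_pi.2 (hSentry y hy)).contDiffWithinAt
  · intro v
    have h00 : xstar + (0:ℝ) • v = xstar := by simp
    have hgdiff : Differentiable ℝ g := hg.differentiable (by norm_num)
    obtain ⟨A', hA'⟩ : ∃ X : Matrix (Fin m) (Fin n) ℝ,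
        X = fun i j => ∑ k, v k * hessianMatrix (fun y => g y i) xstar k j := ⟨_, rfl⟩
    obtain ⟨b', hb'⟩ : ∃ w : Fin n → ℝ,
        w = fun j => ∑ k, v k * hessianMatrix f xstar k j := ⟨_, rfl⟩
    -- derivative of the Jacobian entries along the line
    have hAd : ∀ i j, HasDerivAt (fun t : ℝ => jacobianMatrix g (xstar + t • v) i j)
        (A' i j) 0 := by
      intro i j
      have h1 : HasDerivAt (fun t : ℝ => jacobianMatrix g (xstar + t • v) i j)
          (fderiv ℝ (fun x => jacobianMatrix g x i j) xstar v) 0 :=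
        hasDerivAt_comp_line v ((hAe i j).differentiable one_ne_zero).differentiableAt
      have h2 : (fun x => jacobianMatrix g x i j)
          = fun x => fderiv ℝ (fun y => g y i) x (Pi.single j 1) := by
        funext x; exact jac_entry_eq hgdiff x i j
      rw [h2] at h1
      rw [fderiv_fderiv_line (hgi2 i) xstar v j] at h1
      rw [hA']
      exact h1
    have hATd : ∀ i j, HasDerivAt (fun t : ℝ => (jacobianMatrix g (xstar + t • v))ᵀ i j)
        (A'ᵀ i j) 0 := fun i j => hAd j i
    have hbd : ∀ j, HasDerivAt (fun t : ℝ => gradientVec f (xstar + t • v) j) (b' j) 0 := by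
      intro j
      have h1 : HasDerivAt (fun t : ℝ => gradientVec f (xstar + t • v) j)
          (fderiv ℝ (fun x => gradientVec f x j) xstar v) 0 :=
        hasDerivAt_comp_line v ((hbe j).differentiable one_ne_zero).differentiableAt
      have h2 : (fun x => gradientVec f x j)
          = fun x => fderiv ℝ f x (Pi.single j 1) := rfl
      rw [h2] at h1
      rw [fderiv_fderiv_line hf xstar v j] at h1
      rw [hb']
      exact h1
    have hgvd : ∀ i, HasDerivAt (fun t : ℝ => g (xstar + t • v) i)
        ((jacobianMatrix g xstar).mulVec v i) 0 := by
      intro i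
      have h1 : HasDerivAt (fun t : ℝ => g (xstar + t • v) i)
          (fderiv ℝ (fun x => g x i) xstar v) 0 :=
        hasDerivAt_comp_line v ((hgc i).differentiable one_ne_zero).differentiableAt
      have h2 : fderiv ℝ (fun x => g x i) xstar v
          = (jacobianMatrix g xstar).mulVec v i := by
        rw [clm_apply_basis (fderiv ℝ (fun x => g x i) xstar) v]
        show _ = ∑ k, jacobianMatrix g xstar i k * v k
        refine Finset.sum_congr rfl fun k _ => ?_
        rw [jac_entry_eq hgdiff xstar i k, mul_comm]
      rw [h2] at h1
      exact h1
    -- derivative of M = A Aᵀ entries along the line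
    have hMd : ∀ i j, HasDerivAt
        (fun t : ℝ => (jacobianMatrix g (xstar + t • v) * (jacobianMatrix g (xstar + t • v))ᵀ) i j)
        ((A' * (jacobianMatrix g xstar)ᵀ + jacobianMatrix g xstar * A'ᵀ) i j) 0 := by
      intro i j
      have := matmul_deriv (F := fun t : ℝ => jacobianMatrix g (xstar + t • v))
        (G := fun t : ℝ => (jacobianMatrix g (xstar + t • v))ᵀ) hAd hATd i j
      simpa only [h00] using this
    -- the inverse along the line is differentiable
    have hline : ContDiff ℝ 1 (fun t : ℝ => xstar + t • v) :=
      contDiff_const.add (contDiff_id.smul contDiff_const)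
    have hJdiff : ∀ (i j : Fin m), DifferentiableAt ℝ
        (fun t : ℝ => (jacobianMatrix g (xstar + t • v) * (jacobianMatrix g (xstar + t • v))ᵀ)⁻¹ i j) 0 := by
      intro i j
      have h1 : ContDiffAt ℝ 1
          (fun x => (jacobianMatrix g x * (jacobianMatrix g x)ᵀ)⁻¹ i j)
          (xstar + (0:ℝ) • v) := h00.symm ▸ hMinv_e xstar hUx i j
      exact (h1.comp 0 hline.contDiffAt).differentiableAt one_ne_zero
    obtain ⟨J', hJd⟩ : ∃ X : Matrix (Fin m) (Fin m) ℝ, ∀ i j, HasDerivAt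
        (fun t : ℝ => (jacobianMatrix g (xstar + t • v) * (jacobianMatrix g (xstar + t • v))ᵀ)⁻¹ i j)
        (X i j) 0 :=
      ⟨fun i j => deriv (fun t : ℝ =>
        (jacobianMatrix g (xstar + t • v) * (jacobianMatrix g (xstar + t • v))ᵀ)⁻¹ i j) 0,
        fun i j => (hJdiff i j).hasDerivAt⟩
    -- M * M⁻¹ = 1 near 0 on the line
    have hdet_line : ContinuousAt (fun t : ℝ =>
        (jacobianMatrix g (xstar + t • v) * (jacobianMatrix g (xstar + t • v))ᵀ).det) 0 := by
      have h1 : ContinuousAt (fun x => (jacobianMatrix g x * (jacobianMatrix g x)ᵀ).det)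
          (xstar + (0:ℝ) • v) := h00.symm ▸ hdet_cont.continuousAt
      exact ContinuousAt.comp (g := fun x => (jacobianMatrix g x * (jacobianMatrix g x)ᵀ).det)
        (f := fun t : ℝ => xstar + t • v) h1 hline.continuous.continuousAt
    have hev : ∀ᶠ t : ℝ in nhds 0,
        (jacobianMatrix g (xstar + t • v) * (jacobianMatrix g (xstar + t • v))ᵀ)
          * (jacobianMatrix g (xstar + t • v) * (jacobianMatrix g (xstar + t • v))ᵀ)⁻¹ = 1 := by
      have h1 : ∀ᶠ t : ℝ in nhds 0,
          (jacobianMatrix g (xstar + t • v) * (jacobianMatrix g (xstar + t • v))ᵀ).det ≠ 0 := by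
        apply hdet_line.eventually_ne
        show (jacobianMatrix g (xstar + (0:ℝ) • v) * (jacobianMatrix g (xstar + (0:ℝ) • v))ᵀ).det ≠ 0
        rw [h00]; exact hd0
      exact h1.mono fun t ht => Matrix.mul_nonsing_inv _ (isUnit_iff_ne_zero.mpr ht)
    have hMJ'0 : (A' * (jacobianMatrix g xstar)ᵀ + jacobianMatrix g xstar * A'ᵀ)
          * (jacobianMatrix g xstar * (jacobianMatrix g xstar)ᵀ)⁻¹
        + (jacobianMatrix g xstar * (jacobianMatrix g xstar)ᵀ) * J' = 0 := by
      ext i j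
      have hprod := matmul_deriv
        (F := fun t : ℝ => jacobianMatrix g (xstar + t • v) * (jacobianMatrix g (xstar + t • v))ᵀ)
        (G := fun t : ℝ => (jacobianMatrix g (xstar + t • v) * (jacobianMatrix g (xstar + t • v))ᵀ)⁻¹)
        hMd hJd i j
      simp only [h00] at hprod
      have hconst : HasDerivAt (fun t : ℝ =>
          ((jacobianMatrix g (xstar + t • v) * (jacobianMatrix g (xstar + t • v))ᵀ)
            * (jacobianMatrix g (xstar + t • v) * (jacobianMatrix g (xstar + t • v))ᵀ)⁻¹) i j) 0 0 := by
        apply HasDerivAt.congr_of_eventuallyEq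
          (hasDerivAt_const 0 ((1 : Matrix (Fin m) (Fin m) ℝ) i j))
        exact hev.mono fun t ht => by simp only [ht]
      have := hprod.unique hconst
      simpa using this
    -- invertibility facts
    have hunit : IsUnit (jacobianMatrix g xstar * (jacobianMatrix g xstar)ᵀ).det :=
      isUnit_det_gram _ hreg
    have hJM : (jacobianMatrix g xstar * (jacobianMatrix g xstar)ᵀ)⁻¹
        * (jacobianMatrix g xstar * (jacobianMatrix g xstar)ᵀ) = 1 :=
      Matrix.nonsing_inv_mul _ hunit
    -- solve for J'
    have hMneg : (jacobianMatrix g xstar * (jacobianMatrix g xstar)ᵀ) * J'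
        = -((A' * (jacobianMatrix g xstar)ᵀ + jacobianMatrix g xstar * A'ᵀ)
            * (jacobianMatrix g xstar * (jacobianMatrix g xstar)ᵀ)⁻¹) := by
      have h := hMJ'0
      rw [add_comm] at h
      exact eq_neg_of_add_eq_zero_left h
    have hJ'eq : J' = -((jacobianMatrix g xstar * (jacobianMatrix g xstar)ᵀ)⁻¹
        * ((A' * (jacobianMatrix g xstar)ᵀ + jacobianMatrix g xstar * A'ᵀ)
            * (jacobianMatrix g xstar * (jacobianMatrix g xstar)ᵀ)⁻¹)) := by
      calc J' = ((jacobianMatrix g xstar * (jacobianMatrix g xstar)ᵀ)⁻¹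
            * (jacobianMatrix g xstar * (jacobianMatrix g xstar)ᵀ)) * J' := by
              rw [hJM, Matrix.one_mul]
        _ = (jacobianMatrix g xstar * (jacobianMatrix g xstar)ᵀ)⁻¹
            * ((jacobianMatrix g xstar * (jacobianMatrix g xstar)ᵀ) * J') := by
              rw [Matrix.mul_assoc]
        _ = _ := by rw [hMneg, Matrix.mul_neg]
    -- derivatives of K and P entries
    obtain ⟨K', hK'⟩ : ∃ X : Matrix (Fin n) (Fin m) ℝ,
        X = A'ᵀ * (jacobianMatrix g xstar * (jacobianMatrix g xstar)ᵀ)⁻¹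
          + (jacobianMatrix g xstar)ᵀ * J' := ⟨_, rfl⟩
    have hKd : ∀ i j, HasDerivAt (fun t : ℝ => rightInvMatrix g (xstar + t • v) i j)
        (K' i j) 0 := by
      intro i j
      have := matmul_deriv (F := fun t : ℝ => (jacobianMatrix g (xstar + t • v))ᵀ)
        (G := fun t : ℝ =>
          (jacobianMatrix g (xstar + t • v) * (jacobianMatrix g (xstar + t • v))ᵀ)⁻¹)
        hATd hJd i j
      simp only [h00] at this
      show HasDerivAt (fun t : ℝ => ((jacobianMatrix g (xstar + t • v))ᵀ
        * (jacobianMatrix g (xstar + t • v) * (jacobianMatrix g (xstar + t • v))ᵀ)⁻¹) i j)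
        (K' i j) 0
      rw [hK']
      exact this
    obtain ⟨P', hP'⟩ : ∃ X : Matrix (Fin n) (Fin n) ℝ,
        X = -(K' * jacobianMatrix g xstar + rightInvMatrix g xstar * A') := ⟨_, rfl⟩
    have hPd : ∀ i j, HasDerivAt (fun t : ℝ => projMatrix g (xstar + t • v) i j)
        (P' i j) 0 := by
      intro i j
      have h2 := matmul_deriv (F := fun t : ℝ => rightInvMatrix g (xstar + t • v))
        (G := fun t : ℝ => jacobianMatrix g (xstar + t • v)) hKd hAd i j
      simp only [h00] at h2
      have h3 := h2.const_sub ((1 : Matrix (Fin n) (Fin n) ℝ) i j)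
      show HasDerivAt (fun t : ℝ => ((1 : Matrix (Fin n) (Fin n) ℝ)
        - rightInvMatrix g (xstar + t • v) * jacobianMatrix g (xstar + t • v)) i j)
        (P' i j) 0
      have h4 : P' i j = -((K' * jacobianMatrix g xstar
          + rightInvMatrix g xstar * A') i j) := by rw [hP']; rfl
      rw [h4]
      simpa only [Matrix.sub_apply] using h3
    -- assemble coordinates
    obtain ⟨W, hW⟩ : ∃ w : Fin n → ℝ,
        w = v - η • (P'.mulVec (gradientVec f xstar)
              + (projMatrix g xstar).mulVec b')
          - (K'.mulVec (g xstar)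
              + (rightInvMatrix g xstar).mulVec ((jacobianMatrix g xstar).mulVec v)) := ⟨_, rfl⟩
    have hWd : ∀ j, HasDerivAt (fun t : ℝ =>
        ((xstar + t • v) - η • (projMatrix g (xstar + t • v)).mulVec (gradientVec f (xstar + t • v))
          - (rightInvMatrix g (xstar + t • v)).mulVec (g (xstar + t • v))) j) (W j) 0 := by
      intro j
      have hm1 := mulVec_deriv (F := fun t : ℝ => projMatrix g (xstar + t • v))
        (w := fun t : ℝ => gradientVec f (xstar + t • v)) hPd hbd j
      simp only [h00] at hm1
      have hm2 := mulVec_deriv (F := fun t : ℝ => rightInvMatrix g (xstar + t • v))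
        (w := fun t : ℝ => g (xstar + t • v)) hKd hgvd j
      simp only [h00] at hm2
      have hcoord : HasDerivAt (fun t : ℝ => (xstar + t • v) j) (v j) 0 :=
        hasDerivAt_pi.1 (hasDerivAt_line xstar v 0) j
      have hval : W j = v j
          - η * ((P'.mulVec (gradientVec f xstar) + (projMatrix g xstar).mulVec b') j)
          - ((K'.mulVec (g xstar)
              + (rightInvMatrix g xstar).mulVec ((jacobianMatrix g xstar).mulVec v)) j) := by
        rw [hW]; simp [Pi.sub_apply, Pi.smul_apply, smul_eq_mul, mul_add]
      simp only [hScoord]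
      rw [hval]
      exact (hcoord.sub (hm1.const_mul η)).sub hm2
    have hSdiff : DifferentiableAt ℝ
        (fun x => x - η • (projMatrix g x).mulVec (gradientVec f x)
          - (rightInvMatrix g x).mulVec (g x)) xstar :=
      (contDiffAt_pi.2 (hSentry xstar hUx)).differentiableAt one_ne_zero
    have hfd := hasDerivAt_comp_line v hSdiff
    have hfw : fderiv ℝ (fun x => x - η • (projMatrix g x).mulVec (gradientVec f x)
        - (rightInvMatrix g x).mulVec (g x)) xstar v = W :=
      hfd.unique (hasDerivAt_pi.2 hWd)
    rw [hfw]
    -- Final algebra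
    obtain ⟨Hg, hHg⟩ : ∃ X : Matrix (Fin n) (Fin n) ℝ,
        X = ∑ i, lamstar i • hessianMatrix (fun y => g y i) xstar := ⟨_, rfl⟩
    rw [← hHg]
    have hb0 : gradientVec f xstar = -((jacobianMatrix g xstar)ᵀ.mulVec lamstar) :=
      eq_neg_of_add_eq_zero_left hkkt
    have hb'v : b' = (hessianMatrix f xstar).mulVec v := by
      funext j
      rw [hb']
      show ∑ k, v k * hessianMatrix f xstar k j = ∑ k, hessianMatrix f xstar j k * v k
      refine Finset.sum_congr rfl fun k _ => ?_
      rw [hessian_symm hf xstar j k, mul_comm]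
    have hA'T : A'ᵀ.mulVec lamstar = Hg.mulVec v := by
      funext j
      show ∑ i, A'ᵀ j i * lamstar i = ∑ k, Hg j k * v k
      have h1 : ∀ i : Fin m, A'ᵀ j i * lamstar i
          = ∑ k, v k * hessianMatrix (fun y => g y i) xstar k j * lamstar i := by
        intro i
        have h0 : A'ᵀ j i = ∑ k, v k * hessianMatrix (fun y => g y i) xstar k j := by
          rw [hA']; rfl
        rw [h0, Finset.sum_mul]
      have h2 : ∀ k : Fin n, Hg j k * v k
          = ∑ i, lamstar i * hessianMatrix (fun y => g y i) xstar j k * v k := by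
        intro k
        have h0 : Hg j k = ∑ i, lamstar i * hessianMatrix (fun y => g y i) xstar j k := by
          rw [hHg]; simp [Matrix.sum_apply, Matrix.smul_apply, smul_eq_mul]
        rw [h0, Finset.sum_mul]
      simp only [h1, h2]
      rw [Finset.sum_comm]
      refine Finset.sum_congr rfl fun k _ => Finset.sum_congr rfl fun i _ => ?_
      rw [hessian_symm (hgi2 i) xstar j k]
      ring
    have hKA : rightInvMatrix g xstar * jacobianMatrix g xstar
        = 1 - projMatrix g xstar := by
      have h0 : projMatrix g xstar
          = 1 - rightInvMatrix g xstar * jacobianMatrix g xstar := rfl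
      rw [h0, sub_sub_cancel]
    have hP'A : P' * (jacobianMatrix g xstar)ᵀ = -(projMatrix g xstar * A'ᵀ) := by
      have hP0 : projMatrix g xstar
          = 1 - (jacobianMatrix g xstar)ᵀ
              * (jacobianMatrix g xstar * (jacobianMatrix g xstar)ᵀ)⁻¹
              * jacobianMatrix g xstar := rfl
      have hK0 : rightInvMatrix g xstar
          = (jacobianMatrix g xstar)ᵀ
              * (jacobianMatrix g xstar * (jacobianMatrix g xstar)ᵀ)⁻¹ := rfl
      rw [hP', hK', hJ'eq, hP0, hK0]
      simp only [Matrix.add_mul, Matrix.mul_add, Matrix.sub_mul, Matrix.mul_sub,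
        Matrix.neg_mul, Matrix.mul_neg, Matrix.mul_assoc, Matrix.one_mul,
        Matrix.mul_one, hJM, neg_neg, neg_add]
      abel
    have hP'b : P'.mulVec (gradientVec f xstar)
        = (projMatrix g xstar * Hg).mulVec v := by
      rw [hb0, Matrix.mulVec_neg, Matrix.mulVec_mulVec, hP'A, Matrix.neg_mulVec,
        neg_neg, ← Matrix.mulVec_mulVec, hA'T, Matrix.mulVec_mulVec]
    rw [hW, hfeas, Matrix.mulVec_zero, zero_add, hb'v, hP'b,
      Matrix.mulVec_mulVec, Matrix.mulVec_mulVec, hKA,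
      Matrix.sub_mulVec, Matrix.one_mulVec, Matrix.mul_sub, Matrix.mul_one,
      Matrix.mul_smul, Matrix.mul_add, Matrix.sub_mulVec, Matrix.smul_mulVec,
      Matrix.add_mulVec]
    abel
end

section
/- Let P be the matrix of the orthogonal projection of ℝⁿ onto a nonzero subspace T, and let H be a symmetric n×n real matrix that is positive definite on T, i.e. ⟨Hτ, τ⟩ > 0 for every nonzero τ ∈ T. Set μ₁ = max{⟨Hτ, τ⟩ : τ ∈ T, ‖τ‖₂ = 1}. Then for every η with 0 < η < 2/μ₁, the spectral radius of the matrix P(I − ηH) is strictly less than 1. -/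
open Matrix

/-- Let `P` be the orthogonal projection matrix onto a nonzero subspace
`T = Ran(P)` of `ℝⁿ` (`P² = P`, `Pᵀ = P`, `P ≠ 0`), and let `H` be a symmetric matrix which
is positive definite on `T`. Let `μ₁ = max{⟨Hτ, τ⟩ : τ ∈ T, ‖τ‖₂ = 1}`. Then for every
`0 < η < 2/μ₁`, the spectral radius of `P(I − ηH)` is `< 1`, i.e. every complex eigenvalue
`μ` of `P(I − ηH)` satisfies `|μ| < 1`. -/
theorem spectral_radius_proj_one_sub_smul_lt_one {n : ℕ}
    (P H : Matrix (Fin n) (Fin n) ℝ)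
    (hP2 : P * P = P) (hPsym : Pᵀ = P) (hP0 : P ≠ 0)
    (hHsym : Hᵀ = H)
    (hpos : ∀ τ : Fin n → ℝ, τ ∈ LinearMap.range P.mulVecLin → τ ≠ 0 →
      0 < H.mulVec τ ⬝ᵥ τ)
    (μ₁ : ℝ)
    (hμ₁ : IsGreatest {r : ℝ | ∃ τ : Fin n → ℝ, τ ∈ LinearMap.range P.mulVecLin ∧
      τ ⬝ᵥ τ = 1 ∧ r = H.mulVec τ ⬝ᵥ τ} μ₁) :
    ∀ η : ℝ, 0 < η → η < 2 / μ₁ →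
      ∀ μ : ℂ, (∃ v : Fin n → ℂ, v ≠ 0 ∧
          ((P * (1 - η • H)).map (fun r : ℝ => (r : ℂ))).mulVec v = μ • v) →
        ‖μ‖ < 1 := by
  -- μ₁ is positive
  have hμ₁pos : 0 < μ₁ := by
    obtain ⟨τ, hτmem, hτ1, hτeq⟩ := hμ₁.1
    have hτ0 : τ ≠ 0 := by rintro rfl; simp at hτ1
    rw [hτeq]; exact hpos τ hτmem hτ0
  -- nonnegativity on the range
  have hnn : ∀ τ, τ ∈ LinearMap.range P.mulVecLin → 0 ≤ H.mulVec τ ⬝ᵥ τ := by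
    intro τ hτ
    rcases eq_or_ne τ 0 with rfl | h
    · simp
    · exact (hpos τ hτ h).le
  -- the quadratic form is bounded by μ₁ * ‖τ‖² on the range
  have hbound : ∀ τ, τ ∈ LinearMap.range P.mulVecLin →
      H.mulVec τ ⬝ᵥ τ ≤ μ₁ * (τ ⬝ᵥ τ) := by
    intro τ hτ
    rcases eq_or_ne τ 0 with rfl | h
    · simp
    · have hc : 0 < τ ⬝ᵥ τ := by
        have h0 : 0 ≤ τ ⬝ᵥ τ := Finset.sum_nonneg fun i _ => mul_self_nonneg _
        rcases h0.lt_or_eq with h' | h'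
        · exact h'
        · exact absurd (dotProduct_self_eq_zero.1 h'.symm) h
      set a : ℝ := (Real.sqrt (τ ⬝ᵥ τ))⁻¹ with ha
      have ha2 : a * a = (τ ⬝ᵥ τ)⁻¹ := by
        rw [ha, ← mul_inv, Real.mul_self_sqrt hc.le]
      have hu : (a • τ) ∈ LinearMap.range P.mulVecLin := Submodule.smul_mem _ _ hτ
      have hu1 : (a • τ) ⬝ᵥ (a • τ) = 1 := by
        rw [smul_dotProduct, dotProduct_smul, smul_eq_mul, smul_eq_mul, ← mul_assoc, ha2]
        exact inv_mul_cancel₀ hc.ne'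
      have hle : (τ ⬝ᵥ τ)⁻¹ * (H.mulVec τ ⬝ᵥ τ) ≤ μ₁ := by
        have := hμ₁.2 ⟨a • τ, hu, hu1, rfl⟩
        rwa [mulVec_smul, smul_dotProduct, dotProduct_smul, smul_eq_mul, smul_eq_mul,
          ← mul_assoc, ha2] at this
      have := mul_le_mul_of_nonneg_left hle hc.le
      rw [← mul_assoc, mul_inv_cancel₀ hc.ne', one_mul] at this
      linarith [this]
  intro η hη hη2 μ hex
  obtain ⟨v, hv0, hveq⟩ := hex
  rcases eq_or_ne μ 0 with rfl | hμ0
  · simp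
  set P' : Matrix (Fin n) (Fin n) ℂ := P.map (fun r : ℝ => (r : ℂ)) with hP'
  set H' : Matrix (Fin n) (Fin n) ℂ := H.map (fun r : ℝ => (r : ℂ)) with hH'
  -- rewrite the matrix
  have hmap : (P * (1 - η • H)).map (fun r : ℝ => (r : ℂ)) = P' - (η : ℂ) • (P' * H') := by
    have : P * (1 - η • H) = P - η • (P * H) := by
      rw [mul_sub, mul_one, Matrix.mul_smul]
    rw [this]
    ext i j
    simp [Matrix.sub_apply, Matrix.smul_apply, Matrix.map_apply, Matrix.mul_apply,
      Finset.mul_sum, hP', hH', smul_eq_mul]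
  rw [hmap] at hveq
  have heig : P'.mulVec v - (η : ℂ) • P'.mulVec (H'.mulVec v) = μ • v := by
    rw [← hveq, sub_mulVec, smul_mulVec, mulVec_mulVec]
  have hP'2 : P' * P' = P' := by
    ext i j
    have h := congrFun (congrFun hP2 i) j
    simp only [Matrix.mul_apply] at h
    simp only [hP', Matrix.mul_apply, Matrix.map_apply]
    rw [← h]
    push_cast
    rfl
  have hP'sym : P'ᵀ = P' := by
    ext i j
    simp only [Matrix.transpose_apply, hP', Matrix.map_apply]
    rw [show P j i = Pᵀ i j from rfl, hPsym]
  -- v lies in the range of P'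
  have hPv : P'.mulVec v = v := by
    have h1 : P'.mulVec (μ • v) = μ • v := by
      rw [← heig, mulVec_sub, mulVec_smul, mulVec_mulVec, mulVec_mulVec, hP'2]
    rw [mulVec_smul] at h1
    exact smul_right_injective _ hμ0 h1
  -- star commutes with P'
  have hstarP : P'.mulVec (star v) = star (P'.mulVec v) := by
    ext i
    simp [Matrix.mulVec, dotProduct, hP', Matrix.map_apply, star_sum, star_mul',
      Complex.star_def, Complex.conj_ofReal]
  have hdot : ∀ w : Fin n → ℂ, star v ⬝ᵥ P'.mulVec w = star v ⬝ᵥ w := by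
    intro w
    rw [dotProduct_mulVec]
    congr 1
    rw [← hP'sym, vecMul_transpose, hstarP, hPv]
  -- real and imaginary parts of v
  set x : Fin n → ℝ := fun i => (v i).re with hx
  set y : Fin n → ℝ := fun i => (v i).im with hy
  have hPx : P.mulVec x = x := by
    funext i
    have := congrArg Complex.re (congrFun hPv i)
    simpa [Matrix.mulVec, dotProduct, hP', Matrix.map_apply, Complex.re_sum,
      Complex.re_ofReal_mul, hx] using this
  have hPy : P.mulVec y = y := by
    funext i
    have := congrArg Complex.im (congrFun hPv i)
    simpa [Matrix.mulVec, dotProduct, hP', Matrix.map_apply, Complex.im_sum,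
      Complex.im_ofReal_mul, hy] using this
  have hxmem : x ∈ LinearMap.range P.mulVecLin := ⟨x, by simpa [mulVecLin_apply] using hPx⟩
  have hymem : y ∈ LinearMap.range P.mulVecLin := ⟨y, by simpa [mulVecLin_apply] using hPy⟩
  -- the Hermitian norm S
  set S : ℝ := x ⬝ᵥ x + y ⬝ᵥ y with hS
  have hsS : star v ⬝ᵥ v = (S : ℂ) := by
    rw [hS]
    simp only [dotProduct, Pi.star_apply]
    rw [Complex.ofReal_add, Complex.ofReal_sum, Complex.ofReal_sum, ← Finset.sum_add_distrib]
    refine Finset.sum_congr rfl fun i _ => ?_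
    rw [Complex.star_def, mul_comm, Complex.mul_conj]
    rw [show Complex.normSq (v i) = x i * x i + y i * y i by
      simp [Complex.normSq_apply, hx, hy]]
    push_cast
    ring
  have hSpos : 0 < S := by
    have hnn' : ∀ j, 0 ≤ x j * x j + y j * y j :=
      fun j => add_nonneg (mul_self_nonneg _) (mul_self_nonneg _)
    obtain ⟨i, hi⟩ := Function.ne_iff.1 hv0
    have hvi : v i ≠ 0 := by simpa using hi
    have h0 : 0 < x i * x i + y i * y i := by
      have := Complex.normSq_pos.2 hvi
      simpa [Complex.normSq_apply, hx, hy] using this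
    have hsum : S = ∑ j, (x j * x j + y j * y j) := by
      rw [hS]; simp [dotProduct, Finset.sum_add_distrib]
    rw [hsum]
    exact lt_of_lt_of_le h0
      (Finset.single_le_sum (f := fun j => x j * x j + y j * y j)
        (fun j _ => hnn' j) (Finset.mem_univ i))
  -- value of the Hermitian form of H
  have hxy : x ⬝ᵥ H.mulVec y = y ⬝ᵥ H.mulVec x := by
    rw [dotProduct_mulVec]
    conv_lhs => rw [← hHsym]
    rw [vecMul_transpose, dotProduct_comm]
  set hr : ℝ := H.mulVec x ⬝ᵥ x + H.mulVec y ⬝ᵥ y with hhr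
  have hHv : ∀ i, (H'.mulVec v) i = ((H.mulVec x i : ℝ) : ℂ) + (H.mulVec y i : ℝ) * Complex.I := by
    intro i
    apply Complex.ext
    · simp [Matrix.mulVec, dotProduct, hH', Matrix.map_apply, Complex.re_sum,
        Complex.re_ofReal_mul, hx]
    · simp [Matrix.mulVec, dotProduct, hH', Matrix.map_apply, Complex.im_sum,
        Complex.im_ofReal_mul, hy]
  have hhval : star v ⬝ᵥ H'.mulVec v = (hr : ℂ) := by
    have hsv : ∀ i, star (v i) = (x i : ℂ) - (y i : ℂ) * Complex.I := by
      intro i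
      apply Complex.ext <;> simp [hx, hy]
    have hterm : ∀ i, star (v i) * (H'.mulVec v) i
        = ((x i * H.mulVec x i + y i * H.mulVec y i : ℝ) : ℂ)
          + ((x i * H.mulVec y i - y i * H.mulVec x i : ℝ) : ℂ) * Complex.I := by
      intro i
      rw [hHv i, hsv i]
      push_cast
      linear_combination (-((y i : ℂ) * ((H.mulVec y) i : ℂ))) * Complex.I_sq
    have h1 : ∑ i, (x i * H.mulVec x i + y i * H.mulVec y i) = hr := by
      rw [hhr]
      simp [dotProduct, Finset.sum_add_distrib, mul_comm]
    have h2 : ∑ i, (x i * H.mulVec y i - y i * H.mulVec x i) = 0 := by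
      rw [Finset.sum_sub_distrib,
        show (∑ i, x i * H.mulVec y i) = x ⬝ᵥ H.mulVec y from rfl,
        show (∑ i, y i * H.mulVec x i) = y ⬝ᵥ H.mulVec x from rfl, hxy, sub_self]
    calc star v ⬝ᵥ H'.mulVec v
        = ∑ i, (((x i * H.mulVec x i + y i * H.mulVec y i : ℝ) : ℂ)
          + ((x i * H.mulVec y i - y i * H.mulVec x i : ℝ) : ℂ) * Complex.I) :=
          Finset.sum_congr rfl fun i _ => hterm i
      _ = ((∑ i, (x i * H.mulVec x i + y i * H.mulVec y i) : ℝ) : ℂ)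
          + ((∑ i, (x i * H.mulVec y i - y i * H.mulVec x i) : ℝ) : ℂ) * Complex.I := by
          rw [Finset.sum_add_distrib, ← Finset.sum_mul, Complex.ofReal_sum, Complex.ofReal_sum]
      _ = (hr : ℂ) := by rw [h1, h2]; simp
  -- the key scalar equation
  have key : μ * (S : ℂ) = (S : ℂ) - (η : ℂ) * (hr : ℂ) := by
    have h := congrArg (fun w => star v ⬝ᵥ w) heig
    simp only [dotProduct_sub, dotProduct_smul, smul_eq_mul, hdot] at h
    rw [hsS, hhval] at h
    exact h.symm
  have hS0 : (S : ℂ) ≠ 0 := by exact_mod_cast hSpos.ne'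
  have hμval : μ = (((S - η * hr) / S : ℝ) : ℂ) := by
    rw [eq_comm]
    push_cast
    rw [div_eq_iff hS0]
    exact key.symm
  -- bounds on hr
  have hrpos : 0 < hr := by
    rw [hhr]
    have hx0 : x ≠ 0 ∨ y ≠ 0 := by
      by_contra hcon
      push_neg at hcon
      apply hv0
      funext i
      have h1 := congrFun hcon.1 i
      have h2 := congrFun hcon.2 i
      apply Complex.ext <;> simp_all [hx, hy]
    rcases hx0 with h | h
    · have := hpos x hxmem h
      have := hnn y hymem
      linarith
    · have := hpos y hymem h
      have := hnn x hxmem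
      linarith
  have hrle : hr ≤ μ₁ * S := by
    have h1 := hbound x hxmem
    have h2 := hbound y hymem
    rw [hhr, hS]
    nlinarith
  have hημ₁ : η * μ₁ < 2 := by
    rw [lt_div_iff₀ hμ₁pos] at hη2
    linarith
  clear_value S hr
  have hlt1 : η * hr < 2 * S := by
    nlinarith [mul_le_mul_of_nonneg_left hrle hη.le, mul_lt_mul_of_pos_right hημ₁ hSpos]
  have hlt2 : 0 < η * hr := mul_pos hη hrpos
  rw [hμval, Complex.norm_real, Real.norm_eq_abs, abs_div, abs_of_pos hSpos, div_lt_one hSpos, abs_lt]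
  constructor <;> linarith
end

section
/- Let f : ℝⁿ → ℝ and g : ℝⁿ → ℝᵐ (m < n) be continuously differentiable, let η > 0, and let x* be a regular point satisfying the KKT conditions with multiplier λ* ∈ ℝᵐ. Then the multiplier map Λ(x) = [Dg(x)∇g(x)]⁻¹ [g(x) − η Dg(x)∇f(x)] is well defined and continuous on a neighborhood of x*, and Λ(x*) = η λ*. Consequently, if x⁽ᵏ⁾ → x*, then η⁻¹ Λ(x⁽ᵏ⁾) → λ*. -/
open Matrix

/-- The multiplier map `Λ(x) = [Dg(x)∇g(x)]⁻¹ [g(x) − η Dg(x)∇f(x)]`. -/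
noncomputable def multiplierMap {n m : ℕ} (η : ℝ) (f : (Fin n → ℝ) → ℝ)
    (g : (Fin n → ℝ) → (Fin m → ℝ)) (x : Fin n → ℝ) : Fin m → ℝ :=
  (jacobianMatrix g x * (jacobianMatrix g x)ᵀ)⁻¹.mulVec
    (g x - η • (jacobianMatrix g x).mulVec (gradientVec f x))

lemma continuous_jacobianMatrix {n m : ℕ} {g : (Fin n → ℝ) → (Fin m → ℝ)}
    (hg : ContDiff ℝ 1 g) : Continuous (jacobianMatrix g) := by
  apply continuous_matrix
  intro i j
  have h : Continuous (fun x => fderiv ℝ g x) := hg.continuous_fderiv one_ne_zero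
  exact (continuous_apply i).comp (h.clm_apply continuous_const)

lemma continuous_gradientVec {n : ℕ} {f : (Fin n → ℝ) → ℝ}
    (hf : ContDiff ℝ 1 f) : Continuous (gradientVec f) := by
  apply continuous_pi
  intro j
  have h : Continuous (fun x => fderiv ℝ f x) := hf.continuous_fderiv one_ne_zero
  exact h.clm_apply continuous_const

/-- At a regular KKT point `x*` with multiplier `λ*`, the multiplier map
`Λ(x) = [Dg(x)∇g(x)]⁻¹ [g(x) − η Dg(x)∇f(x)]` is well defined and continuous near `x*`,
satisfies `Λ(x*) = η λ*`, and consequently `η⁻¹ Λ(x⁽ᵏ⁾) → λ*` whenever `x⁽ᵏ⁾ → x*`. -/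
theorem multiplier_map_continuous_and_converges {n m : ℕ} (hmn : m < n)
    (η : ℝ) (hη : 0 < η)
    (f : (Fin n → ℝ) → ℝ) (g : (Fin n → ℝ) → (Fin m → ℝ))
    (hf : ContDiff ℝ 1 f) (hg : ContDiff ℝ 1 g)
    (xstar : Fin n → ℝ) (lamstar : Fin m → ℝ)
    (hreg : (jacobianMatrix g xstar).rank = m)
    (hfeas : g xstar = 0)
    (hkkt : gradientVec f xstar + (jacobianMatrix g xstar)ᵀ.mulVec lamstar = 0) :
    ∃ U ∈ nhds xstar,
      ContinuousOn (multiplierMap η f g) U ∧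
      multiplierMap η f g xstar = η • lamstar ∧
      ∀ xseq : ℕ → (Fin n → ℝ),
        Filter.Tendsto xseq Filter.atTop (nhds xstar) →
        Filter.Tendsto (fun k => η⁻¹ • multiplierMap η f g (xseq k))
          Filter.atTop (nhds lamstar) := by
  have hJc : Continuous (jacobianMatrix g) := continuous_jacobianMatrix hg
  set M : (Fin n → ℝ) → Matrix (Fin m) (Fin m) ℝ :=
    fun x => jacobianMatrix g x * (jacobianMatrix g x)ᵀ with hM
  have hMc : Continuous M := hJc.matrix_mul hJc.matrix_transpose
  -- invertibility at xstar
  have hunit : IsUnit (M xstar) := by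
    rw [← Matrix.mulVec_surjective_iff_isUnit]
    have hrank : (M xstar).rank = m := by
      exact (Matrix.rank_self_mul_transpose (jacobianMatrix g xstar)).trans hreg
    have htop : LinearMap.range (M xstar).mulVecLin = ⊤ := by
      apply Submodule.eq_top_of_finrank_eq
      rw [show Module.finrank ℝ (LinearMap.range (M xstar).mulVecLin)
          = (M xstar).rank from rfl, hrank]
      simp [Module.finrank_pi]
    intro v
    obtain ⟨w, hw⟩ := (htop ▸ Submodule.mem_top : v ∈ LinearMap.range (M xstar).mulVecLin)
    exact ⟨w, hw⟩
  have hdetu : IsUnit (M xstar).det := (Matrix.isUnit_iff_isUnit_det _).mp hunit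
  have hdet : (M xstar).det ≠ 0 := hdetu.ne_zero
  -- continuity at every point with nonvanishing determinant
  have hwc : Continuous (fun x => g x - η • (jacobianMatrix g x).mulVec (gradientVec f x)) :=
    hg.continuous.sub ((hJc.matrix_mulVec (continuous_gradientVec hf)).const_smul η)
  have hcontAt : ∀ x, (M x).det ≠ 0 → ContinuousAt (multiplierMap η f g) x := by
    intro x hx
    have hinvAt : ContinuousAt (fun x => (M x)⁻¹) x := by
      have h1 : ContinuousAt Ring.inverse ((M x).det) := by
        simpa [Ring.inverse_eq_inv'] using continuousAt_inv₀ hx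
      exact (continuousAt_matrix_inv (M x) h1).comp hMc.continuousAt
    have hmv : Continuous (fun p : Matrix (Fin m) (Fin m) ℝ × (Fin m → ℝ) => p.1.mulVec p.2) :=
      continuous_fst.matrix_mulVec continuous_snd
    have : ContinuousAt
        (fun x => ((M x)⁻¹).mulVec (g x - η • (jacobianMatrix g x).mulVec (gradientVec f x))) x :=
      hmv.continuousAt.comp (f := fun x => ((M x)⁻¹, g x - η • (jacobianMatrix g x).mulVec (gradientVec f x)))
        (ContinuousAt.prodMk hinvAt hwc.continuousAt)
    exact this
  refine ⟨{x | (M x).det ≠ 0}, (isOpen_ne.preimage hMc.matrix_det).mem_nhds hdet,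
    fun x hx => (hcontAt x hx).continuousWithinAt, ?_, ?_⟩
  · -- value at xstar
    have hgrad : gradientVec f xstar = -((jacobianMatrix g xstar)ᵀ.mulVec lamstar) := by
      rw [← add_eq_zero_iff_eq_neg]; exact hkkt
    rw [multiplierMap, hfeas, hgrad]
    rw [Matrix.mulVec_neg, smul_neg, zero_sub, neg_neg, Matrix.mulVec_mulVec,
      Matrix.mulVec_smul, Matrix.mulVec_mulVec, Matrix.nonsing_inv_mul _ hdetu,
      Matrix.one_mulVec]
  · intro xseq hseq
    have h1 : Filter.Tendsto (fun k => multiplierMap η f g (xseq k)) Filter.atTop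
        (nhds (multiplierMap η f g xstar)) := ((hcontAt xstar hdet).tendsto).comp hseq
    have h2 := h1.const_smul η⁻¹
    have hval : multiplierMap η f g xstar = η • lamstar := by
      have hgrad : gradientVec f xstar = -((jacobianMatrix g xstar)ᵀ.mulVec lamstar) := by
        rw [← add_eq_zero_iff_eq_neg]; exact hkkt
      rw [multiplierMap, hfeas, hgrad]
      rw [Matrix.mulVec_neg, smul_neg, zero_sub, neg_neg, Matrix.mulVec_mulVec,
        Matrix.mulVec_smul, Matrix.mulVec_mulVec, Matrix.nonsing_inv_mul _ hdetu,
        Matrix.one_mulVec]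
    rw [hval] at h2
    simpa [smul_smul, inv_mul_cancel₀ hη.ne'] using h2
end
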